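/- arXiv:2512.21800 — 4 statements merged into one kernel-verified Lean document; each statement's English description precedes it below -/
import Mathlib

section
/- For every integer p ≥ 1, every (pK₂ ∪ P₃)-free graph G satisfies χ(G) ≤ C(ω(G)+2p, 2p+1), where P₃ is the path on 3 vertices and C(a,b) denotes the binomial coefficient. -/
open SimpleGraph

/-- `pK₂`: the disjoint union of `p` copies of the single-edge graph `K₂`. -/
def pK2 (p : ℕ) : SimpleGraph (Fin p × Fin 2) where
  Adj x y := x.1 = y.1 ∧ x.2 ≠ y.2
  symm := ⟨fun _ _ h => ⟨h.1.symm, h.2.symm⟩⟩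
  loopless := ⟨fun _ h => h.2 rfl⟩

open Finset


lemma hockey2 (a : ℕ) : ∀ n : ℕ, 1 + ∑ j ∈ range n, (j+a+1).choose a = (n+a+1).choose (a+1) := by
  intro n
  induction n with
  | zero => simp
  | succ n ih =>
    rw [Finset.sum_range_succ, ← add_assoc, ih]
    have h1 := Nat.choose_succ_succ' (n+a+1) a
    have h2 : n+1+a+1 = n+a+1+1 := by omega
    rw [h2]
    omega

lemma keyidS (q : ℕ) : ∀ ω : ℕ,
    ω + ∑ j ∈ range ω, (ω-1-j) * ((j+q+2).choose (q+1)) = (ω+q+2).choose (q+3) := by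
  intro ω
  induction ω with
  | zero => simp [Nat.choose_eq_zero_of_lt]
  | succ ω ih =>
    have hsplit : ∑ j ∈ range (ω+1), (ω+1-1-j) * ((j+q+2).choose (q+1))
        = (∑ j ∈ range ω, (ω-1-j) * ((j+q+2).choose (q+1)))
          + ∑ j ∈ range ω, (j+q+2).choose (q+1) := by
      rw [Finset.sum_range_succ]
      have hlast : (ω+1-1-ω) * ((ω+q+2).choose (q+1)) = 0 := by
        have : ω+1-1-ω = 0 := by omega
        simp [this]
      rw [hlast, add_zero, ← Finset.sum_add_distrib]
      apply Finset.sum_congr rfl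
      intro j hj
      have hj' := Finset.mem_range.mp hj
      have : ω+1-1-j = (ω-1-j) + 1 := by omega
      rw [this, add_mul, one_mul]
    have hh := hockey2 (q+1) ω
    have hsum : ∑ j ∈ range ω, (j+(q+1)+1).choose (q+1) = ∑ j ∈ range ω, (j+q+2).choose (q+1) := by
      rfl
    rw [hsum] at hh
    have he1 : ω+(q+1)+1 = ω+q+2 := by omega
    have he2 : q+1+1 = q+2 := by omega
    rw [he1, he2] at hh
    have hp := Nat.choose_succ_succ' (ω+q+2) (q+2)
    have he3 : q+2+1 = q+3 := by omega
    rw [he3] at hp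
    have he4 : ω+1+q+2 = ω+q+2+1 := by omega
    rw [hsplit, he4]
    omega

lemma keyid (q : ℕ) (ω : ℕ) :
    ω + ∑ j ∈ range ω, j * ((ω-1-j + (q+2)).choose (q+1)) = (ω+(q+2)).choose (q+3) := by
  have hrefl := Finset.sum_range_reflect (fun j => j * ((ω-1-j + (q+2)).choose (q+1))) ω
  rw [← hrefl]
  have hc : ∑ j ∈ range ω, (ω-1-j) * ((ω-1-(ω-1-j) + (q+2)).choose (q+1))
      = ∑ j ∈ range ω, (ω-1-j) * ((j+q+2).choose (q+1)) := by
    apply Finset.sum_congr rfl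
    intro j hj
    have hj' := Finset.mem_range.mp hj
    congr 2
    omega
  rw [hc]
  have h := keyidS q ω
  have h2 : ω + (q+2) = ω+q+2 := by omega
  rw [h2]
  exact h


lemma p3_trans {V : Type} {G : SimpleGraph V} (h : IsEmpty ((pathGraph 3) ↪g G)) :
    ∀ a b c : V, G.Adj a b → G.Adj a c → b ≠ c → G.Adj b c := by
  intro a b c hab hac hbc
  by_contra hn
  have hba : b ≠ a := (G.ne_of_adj hab).symm
  have hca : c ≠ a := (G.ne_of_adj hac).symm
  have f : Fin 3 → V := ![b, a, c]
  have hinj : Function.Injective (![b, a, c] : Fin 3 → V) := by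
    intro x y hxy
    fin_cases x <;> fin_cases y <;> simp_all <;> simp_all [eq_comm]
  have hmap : ∀ x y : Fin 3, G.Adj ((![b, a, c] : Fin 3 → V) x) ((![b, a, c] : Fin 3 → V) y)
      ↔ (pathGraph 3).Adj x y := by
    intro x y
    have hnab : ¬ G.Adj b c := hn
    have hncb : ¬ G.Adj c b := fun h' => hn h'.symm
    fin_cases x <;> fin_cases y <;>
      simp [pathGraph_adj, hab, hac, hab.symm, hac.symm, hnab, hncb] <;> omega
  exact h.false ⟨⟨![b, a, c], hinj⟩, @fun x y => hmap x y⟩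

lemma p3free_colorable {V : Type} [Fintype V] (G : SimpleGraph V)
    (h : IsEmpty ((pathGraph 3) ↪g G)) : G.Colorable G.cliqueNum := by
  classical
  have htrans := p3_trans h
  letI : LinearOrder V := LinearOrder.lift' (fun v => (Fintype.equivFin V) v)
    (Equiv.injective _)
  set cls : V → Finset V := fun v => univ.filter (fun w => w = v ∨ G.Adj v w) with hcls
  have hmem : ∀ v, v ∈ cls v := by intro v; simp [hcls]
  have hclique : ∀ v, G.IsClique (cls v : Set V) := by
    intro v x hx y hy hxy
    simp only [hcls, coe_filter, Set.mem_setOf_eq, mem_univ, true_and] at hx hy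
    rcases hx with rfl | hx
    · rcases hy with rfl | hy
      · exact absurd rfl hxy
      · exact hy
    · rcases hy with rfl | hy
      · exact hx.symm
      · exact htrans v x y hx hy hxy
  have hclseq : ∀ a b, G.Adj a b → cls a = cls b := by
    intro a b hab
    ext w
    simp only [hcls, mem_filter, mem_univ, true_and]
    constructor
    · rintro (rfl | hw)
      · exact Or.inr hab.symm
      · rcases eq_or_ne w b with rfl | hne
        · exact Or.inl rfl
        · exact Or.inr (htrans a b w hab hw hne.symm)
    · rintro (rfl | hw)
      · exact Or.inr hab
      · rcases eq_or_ne w a with rfl | hne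
        · exact Or.inl rfl
        · exact Or.inr (htrans b a w hab.symm hw hne.symm)
  rw [colorable_iff_exists_bdd_nat_coloring]
  have hbd : ∀ v, ((cls v).filter (· < v)).card < G.cliqueNum := by
    intro v
    have hsub : insert v ((cls v).filter (· < v)) ⊆ cls v := by
      intro x hx
      rcases Finset.mem_insert.mp hx with rfl | hx
      · exact hmem _
      · exact Finset.mem_of_mem_filter x hx
    have hnm : v ∉ (cls v).filter (· < v) := by simp
    have h1 := Finset.card_le_card hsub
    rw [Finset.card_insert_of_notMem hnm] at h1
    have h2 : (cls v).card ≤ G.cliqueNum := (hclique v).card_le_cliqueNum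
    omega
  refine ⟨Coloring.mk (fun v => ((cls v).filter (· < v)).card) ?_, fun v => hbd v⟩
  intro a b hab hEq
  have hEq' : ((cls a).filter (· < a)).card = ((cls b).filter (· < b)).card := hEq
  rw [hclseq a b hab] at hEq'
  have hne : a ≠ b := G.ne_of_adj hab
  rcases hne.lt_or_gt with hlt | hlt
  · have hss : (cls b).filter (· < a) ⊂ (cls b).filter (· < b) := by
      refine Finset.ssubset_iff_of_subset (Finset.monotone_filter_right _ ?_) |>.mpr ?_
      · intro x _ hx; exact hx.trans hlt
      · refine ⟨a, ?_, by simp⟩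
        simp only [Finset.mem_filter]
        exact ⟨by rw [← hclseq a b hab]; exact hmem a, hlt⟩
    have := Finset.card_lt_card hss
    omega
  · have hss : (cls b).filter (· < b) ⊂ (cls b).filter (· < a) := by
      refine Finset.ssubset_iff_of_subset (Finset.monotone_filter_right _ ?_) |>.mpr ?_
      · intro x _ hx; exact hx.trans hlt
      · refine ⟨b, ?_, by simp⟩
        simp only [Finset.mem_filter]
        exact ⟨hmem b, hlt⟩
    have := Finset.card_lt_card hss
    omega

lemma pK2_adj {p : ℕ} {x y : Fin p × Fin 2} :
    (pK2 p).Adj x y ↔ x.1 = y.1 ∧ x.2 ≠ y.2 := Iff.rfl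

lemma sum_emb_of_p3 {V : Type} {G : SimpleGraph V} (f : (pathGraph 3) ↪g G) :
    Nonempty ((pK2 0 ⊕g pathGraph 3) ↪g G) := by
  refine ⟨⟨⟨fun x => Sum.elim (fun z => z.1.elim0) (fun y => f y) x, ?_⟩, ?_⟩⟩
  · intro x y hxy
    match x, y with
    | Sum.inl a, _ => exact a.1.elim0
    | _, Sum.inl b => exact b.1.elim0
    | Sum.inr a, Sum.inr b => simp only [Sum.elim_inr] at hxy; exact congrArg _ (f.injective hxy)
  · intro x y
    match x, y with
    | Sum.inl a, _ => exact a.1.elim0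
    | Sum.inr a, Sum.inl b => exact b.1.elim0
    | Sum.inr a, Sum.inr b => exact f.map_adj_iff

lemma emb_extend {V : Type} {G : SimpleGraph V} {p : ℕ} {x y : V} (hxy : G.Adj x y)
    (B : Set V) (hBx : ∀ u ∈ B, ¬G.Adj u x ∧ ¬G.Adj u y)
    (F : (pK2 p ⊕g pathGraph 3) ↪g G.induce B) :
    Nonempty ((pK2 (p+1) ⊕g pathGraph 3) ↪g G) := by
  classical
  have hxB : x ∉ B := fun hx => (hBx x hx).2 hxy
  have hyB : y ∉ B := fun hy => (hBx y hy).1 hxy.symm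
  set g : (Fin p × Fin 2) ⊕ Fin 3 → V := fun z => (F z : V) with hg
  have hgB : ∀ z, g z ∈ B := fun z => (F z).2
  have hginj : Function.Injective g := fun a b hab => F.injective (Subtype.ext hab)
  have hgadj : ∀ a b, G.Adj (g a) (g b) ↔ (pK2 p ⊕g pathGraph 3).Adj a b := by
    intro a b
    rw [← F.map_adj_iff]
    rfl
  have hgnx : ∀ z, ¬ G.Adj (g z) x := fun z => (hBx _ (hgB z)).1
  have hgny : ∀ z, ¬ G.Adj (g z) y := fun z => (hBx _ (hgB z)).2
  set f : (Fin (p+1) × Fin 2) ⊕ Fin 3 → V := fun z => Sum.elim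
    (fun kt => if h : kt.1.val < p then g (Sum.inl (⟨kt.1.val, h⟩, kt.2))
               else (if kt.2 = 0 then x else y))
    (fun w => g (Sum.inr w)) z with hfdef
  have hfa : ∀ (k : Fin (p+1)) (t : Fin 2) (h : k.val < p),
      f (Sum.inl (k, t)) = g (Sum.inl (⟨k.val, h⟩, t)) := by
    intro k t h; simp only [hfdef, Sum.elim_inl]; rw [dif_pos h]
  have hfb0 : ∀ (k : Fin (p+1)) (t : Fin 2), ¬ k.val < p → t = 0 → f (Sum.inl (k, t)) = x := by
    intro k t h ht; simp only [hfdef, Sum.elim_inl]; rw [dif_neg h, if_pos ht]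
  have hfb1 : ∀ (k : Fin (p+1)) (t : Fin 2), ¬ k.val < p → t ≠ 0 → f (Sum.inl (k, t)) = y := by
    intro k t h ht; simp only [hfdef, Sum.elim_inl]; rw [dif_neg h, if_neg ht]
  have hfr : ∀ w, f (Sum.inr w) = g (Sum.inr w) := fun w => rfl
  have hne_xy : x ≠ y := G.ne_of_adj hxy
  -- t values
  have ht2 : ∀ t : Fin 2, t = 0 ∨ t = 1 := by decide
  have finj : Function.Injective f := by
    rintro (⟨k, t⟩ | w) (⟨k', t'⟩ | w') h
    · by_cases h1 : k.val < p <;> by_cases h2 : k'.val < p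
      · rw [hfa k t h1, hfa k' t' h2] at h
        have := hginj h
        simp only [Sum.inl.injEq, Prod.mk.injEq, Fin.mk.injEq] at this
        simp only [Sum.inl.injEq, Prod.mk.injEq]
        exact ⟨Fin.ext this.1, this.2⟩
      · exfalso
        rw [hfa k t h1] at h
        rcases ht2 t' with ht | ht
        · rw [hfb0 k' t' h2 ht] at h; exact hxB (h ▸ hgB _)
        · rw [hfb1 k' t' h2 (by simp [ht])] at h; exact hyB (h ▸ hgB _)
      · exfalso
        rw [hfa k' t' h2] at h
        rcases ht2 t with ht | ht
        · rw [hfb0 k t h1 ht] at h; exact hxB (h.symm ▸ hgB _)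
        · rw [hfb1 k t h1 (by simp [ht])] at h; exact hyB (h.symm ▸ hgB _)
      · have hk : k = k' := Fin.ext (by have := k.2; have := k'.2; omega)
        rcases ht2 t with ht | ht <;> rcases ht2 t' with ht' | ht'
        · simp [hk, ht, ht']
        · exfalso
          rw [hfb0 k t h1 ht, hfb1 k' t' h2 (by simp [ht'])] at h
          exact hne_xy h
        · exfalso
          rw [hfb1 k t h1 (by simp [ht]), hfb0 k' t' h2 ht'] at h
          exact hne_xy h.symm
        · simp [hk, ht, ht']
    · exfalso
      rw [hfr] at h
      by_cases h1 : k.val < p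
      · rw [hfa k t h1] at h
        exact (by simpa using hginj h : False)
      · rcases ht2 t with ht | ht
        · rw [hfb0 k t h1 ht] at h; exact hxB (h ▸ hgB _)
        · rw [hfb1 k t h1 (by simp [ht])] at h; exact hyB (h ▸ hgB _)
    · exfalso
      rw [hfr] at h
      by_cases h2 : k'.val < p
      · rw [hfa k' t' h2] at h
        exact (by simpa using hginj h : False)
      · rcases ht2 t' with ht | ht
        · rw [hfb0 k' t' h2 ht] at h; exact hxB (h.symm ▸ hgB _)
        · rw [hfb1 k' t' h2 (by simp [ht])] at h; exact hyB (h.symm ▸ hgB _)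
    · rw [hfr, hfr] at h
      have := hginj h
      simpa using this
  have fadj : ∀ a b, G.Adj (f a) (f b) ↔ (pK2 (p+1) ⊕g pathGraph 3).Adj a b := by
    rintro (⟨k, t⟩ | w) (⟨k', t'⟩ | w')
    · have hRHS : (pK2 (p+1) ⊕g pathGraph 3).Adj (Sum.inl (k,t)) (Sum.inl (k',t'))
          ↔ (k = k' ∧ t ≠ t') := Iff.rfl
      rw [hRHS]
      by_cases h1 : k.val < p <;> by_cases h2 : k'.val < p
      · rw [hfa k t h1, hfa k' t' h2, hgadj]
        have : (pK2 p ⊕g pathGraph 3).Adj (Sum.inl (⟨k.val,h1⟩,t)) (Sum.inl (⟨k'.val,h2⟩,t'))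
            ↔ ((⟨k.val,h1⟩ : Fin p) = ⟨k'.val,h2⟩ ∧ t ≠ t') := Iff.rfl
        rw [this]
        constructor
        · rintro ⟨hh, htt⟩
          refine ⟨Fin.ext ?_, htt⟩
          simpa using congrArg Fin.val hh
        · rintro ⟨hh, htt⟩
          refine ⟨Fin.ext ?_, htt⟩
          simpa using congrArg Fin.val hh
      · rw [hfa k t h1]
        constructor
        · intro hadj
          exfalso
          rcases ht2 t' with ht | ht
          · rw [hfb0 k' t' h2 ht] at hadj; exact hgnx _ hadj
          · rw [hfb1 k' t' h2 (by simp [ht])] at hadj; exact hgny _ hadj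
        · rintro ⟨hh, -⟩
          exfalso
          have := congrArg Fin.val hh
          omega
      · rw [hfa k' t' h2]
        constructor
        · intro hadj
          exfalso
          rcases ht2 t with ht | ht
          · rw [hfb0 k t h1 ht] at hadj; exact hgnx _ hadj.symm
          · rw [hfb1 k t h1 (by simp [ht])] at hadj; exact hgny _ hadj.symm
        · rintro ⟨hh, -⟩
          exfalso
          have := congrArg Fin.val hh
          omega
      · have hk : k = k' := Fin.ext (by have := k.2; have := k'.2; omega)
        rcases ht2 t with ht | ht <;> rcases ht2 t' with ht' | ht'
        · rw [hfb0 k t h1 ht, hfb0 k' t' h2 ht']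
          simp [ht, ht', G.loopless]
        · rw [hfb0 k t h1 ht, hfb1 k' t' h2 (by simp [ht'])]
          simp only [hxy, true_iff]
          exact ⟨hk, by simp [ht, ht']⟩
        · rw [hfb1 k t h1 (by simp [ht]), hfb0 k' t' h2 ht']
          simp only [hxy.symm, true_iff]
          exact ⟨hk, by simp [ht, ht']⟩
        · rw [hfb1 k t h1 (by simp [ht]), hfb1 k' t' h2 (by simp [ht'])]
          simp [ht, ht', G.loopless]
    · rw [hfr]
      have hRHS : ¬ (pK2 (p+1) ⊕g pathGraph 3).Adj (Sum.inl (k,t)) (Sum.inr w') := by simp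
      simp only [hRHS, iff_false]
      intro hadj
      by_cases h1 : k.val < p
      · rw [hfa k t h1, hgadj] at hadj
        simp at hadj
      · rcases ht2 t with ht | ht
        · rw [hfb0 k t h1 ht] at hadj; exact hgnx _ hadj.symm
        · rw [hfb1 k t h1 (by simp [ht])] at hadj; exact hgny _ hadj.symm
    · rw [hfr]
      have hRHS : ¬ (pK2 (p+1) ⊕g pathGraph 3).Adj (Sum.inr w) (Sum.inl (k',t')) := by simp
      simp only [hRHS, iff_false]
      intro hadj
      by_cases h2 : k'.val < p
      · rw [hfa k' t' h2, hgadj] at hadj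
        simp at hadj
      · rcases ht2 t' with ht | ht
        · rw [hfb0 k' t' h2 ht] at hadj; exact hgnx _ hadj
        · rw [hfb1 k' t' h2 (by simp [ht])] at hadj; exact hgny _ hadj
    · rw [hfr, hfr, hgadj]
      constructor
      · intro h; exact h
      · intro h; exact h
  exact ⟨⟨⟨f, finj⟩, @fun a b => fadj a b⟩⟩



theorem main_col (p : ℕ) : ∀ (V : Type) [Fintype V] (G : SimpleGraph V),
    IsEmpty ((pK2 p ⊕g pathGraph 3) ↪g G) →
    G.Colorable ((G.cliqueNum + 2*p).choose (2*p+1)) := by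
  induction p with
  | zero =>
    intro V _ G hG
    have hp3 : IsEmpty ((pathGraph 3) ↪g G) :=
      ⟨fun f => hG.false (sum_emb_of_p3 f).some⟩
    have h := p3free_colorable G hp3
    simpa using h
  | succ p IH =>
    intro V _ G hG
    classical
    set ω := G.cliqueNum with hω
    obtain ⟨K, hK⟩ := G.exists_isNClique_cliqueNum
    set EQ : {x // x ∈ K} ≃ Fin ω := K.equivFin.trans (finCongr hK.card_eq) with hEQ
    set e : Fin ω → V := fun i => (EQ.symm i : V) with he
    have he_mem : ∀ i, e i ∈ K := fun i => (EQ.symm i).2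
    have he_inj : Function.Injective e := fun i j h => EQ.symm.injective (Subtype.ext h)
    have he_surj : ∀ u (hu : u ∈ K), e (EQ ⟨u, hu⟩) = u := by
      intro u hu; simp [he]
    have he_adj : ∀ i j : Fin ω, i ≠ j → G.Adj (e i) (e j) := fun i j hij =>
      hK.isClique (he_mem i) (he_mem j) (fun h => hij (he_inj h))
    set NN : V → Finset (Fin ω) := fun u => univ.filter (fun i => ¬ G.Adj u (e i)) with hNNdef
    have hNNmem : ∀ u (i : Fin ω), i ∈ NN u ↔ ¬ G.Adj u (e i) := by
      intro u i; simp [hNNdef]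
    have hNN : ∀ u, u ∉ K → (NN u).Nonempty := by
      intro u hu
      by_contra hne
      rw [Finset.not_nonempty_iff_eq_empty] at hne
      have hadjall : ∀ w ∈ K, G.Adj u w := by
        intro w hw
        have : EQ ⟨w, hw⟩ ∉ NN u := by rw [hne]; exact Finset.notMem_empty _
        rw [hNNmem, not_not, he_surj w hw] at this
        exact this
      have hclq : G.IsClique (insert u K : Finset V) := by
        intro x hx y hy hne2
        simp only [Finset.coe_insert, Set.mem_insert_iff, Finset.mem_coe] at hx hy
        rcases hx with rfl | hx
        · rcases hy with rfl | hy
          · exact absurd rfl hne2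
          · exact hadjall y hy
        · rcases hy with rfl | hy
          · exact (hadjall x hx).symm
          · exact hK.isClique hx hy hne2
      have hcard : (insert u K).card = ω + 1 := by
        rw [Finset.card_insert_of_notMem hu, hK.card_eq]
      have := hclq.card_le_cliqueNum
      rw [hcard] at this
      omega
    set Bset : Fin ω → Fin ω → Set V := fun j i =>
      {u | u ∉ K ∧ ¬G.Adj u (e i) ∧ ¬G.Adj u (e j) ∧
        ∀ k : Fin ω, k.val < j.val → k ≠ i → G.Adj u (e k)} with hBdef
    set b : Fin ω → ℕ := fun j => ((ω - 1 - j.val) + (2*p+2)).choose (2*p+1) with hbdef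
    have hbpos : ∀ j, 0 < b j := fun j => Nat.choose_pos (by omega)
    -- freeness of the B sets
    have hBfree : ∀ j i : Fin ω, i ≠ j →
        IsEmpty ((pK2 p ⊕g pathGraph 3) ↪g G.induce (Bset j i)) := by
      intro j i hij
      constructor
      intro F
      have hedge : G.Adj (e i) (e j) := he_adj i j hij
      obtain ⟨F'⟩ := emb_extend hedge (Bset j i)
        (fun u hu => ⟨hu.2.1, hu.2.2.1⟩) F
      exact hG.false F'
    -- clique number bound on B sets
    have hBclique : ∀ j i : Fin ω, i.val < j.val →
        (G.induce (Bset j i)).cliqueNum ≤ ω + 1 - j.val := by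
      intro j i hij
      haveI : Fintype ↥(Bset j i) := Fintype.ofFinite _
      obtain ⟨s, hs⟩ := (G.induce (Bset j i)).exists_isNClique_cliqueNum
      set t1 : Finset V := s.image Subtype.val with ht1
      set KF : Finset (Fin ω) := univ.filter (fun k : Fin ω => k.val < j.val ∧ k ≠ i) with hKF
      set t2 : Finset V := KF.image e with ht2
      have ht1card : t1.card = s.card := Finset.card_image_of_injective _ Subtype.val_injective
      have hKFcard : KF.card = j.val - 1 := by
        have h1 : KF = (univ.filter (fun k : Fin ω => k.val < j.val)).erase i := by
          ext k
          simp only [hKF, Finset.mem_filter, Finset.mem_erase, Finset.mem_univ, true_and]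
          tauto
        have h2 : (univ.filter (fun k : Fin ω => k.val < j.val)).card = j.val := by
          conv_rhs => rw [← Finset.card_range j.val]
          apply Finset.card_bij (fun (k : Fin ω) _ => k.val) ?_ ?_ ?_
          · intro k hk
            simp only [Finset.mem_filter] at hk
            exact Finset.mem_range.mpr hk.2
          · intro k hk k' hk' h
            exact Fin.ext h
          · intro m hm
            have hm' := Finset.mem_range.mp hm
            refine ⟨⟨m, hm'.trans j.2⟩, ?_, rfl⟩
            simp only [Finset.mem_filter, Finset.mem_univ, true_and]
            exact hm'
        rw [h1, Finset.card_erase_of_mem, h2]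
        simp only [Finset.mem_filter, Finset.mem_univ, true_and]
        exact hij
      have ht2card : t2.card = j.val - 1 := by
        rw [ht2, Finset.card_image_of_injective _ he_inj, hKFcard]
      have hdisj : Disjoint t1 t2 := by
        rw [Finset.disjoint_left]
        intro a ha ha2
        simp only [ht1, Finset.mem_image] at ha
        obtain ⟨a', _, rfl⟩ := ha
        simp only [ht2, Finset.mem_image] at ha2
        obtain ⟨k, _, hk⟩ := ha2
        exact a'.2.1 (hk ▸ he_mem k)
      have hclq : G.IsClique ((t1 ∪ t2) : Finset V) := by
        intro x hx y hy hne
        simp only [Finset.coe_union, Set.mem_union, Finset.mem_coe, ht1, ht2,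
          Finset.mem_image] at hx hy
        rcases hx with ⟨x', hx', rfl⟩ | ⟨kx, hkx, rfl⟩
        · rcases hy with ⟨y', hy', rfl⟩ | ⟨ky, hky, rfl⟩
          · have hxy' : x' ≠ y' := fun h => hne (congrArg Subtype.val h)
            exact hs.isClique hx' hy' hxy'
          · simp only [hKF, Finset.mem_filter, Finset.mem_univ, true_and] at hky
            exact x'.2.2.2.2 ky hky.1 hky.2
        · rcases hy with ⟨y', hy', rfl⟩ | ⟨ky, hky, rfl⟩
          · simp only [hKF, Finset.mem_filter, Finset.mem_univ, true_and] at hkx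
            exact (y'.2.2.2.2 kx hkx.1 hkx.2).symm
          · exact he_adj kx ky (fun h => hne (congrArg e h))
      have hcard := hclq.card_le_cliqueNum
      rw [Finset.card_union_of_disjoint hdisj, ht1card, ht2card] at hcard
      have hjv : j.val < ω := j.2
      have hscard : s.card = (G.induce (Bset j i)).cliqueNum := hs.card_eq
      omega
    have hBcol : ∀ j i : Fin ω, i.val < j.val → (G.induce (Bset j i)).Colorable (b j) := by
      intro j i hij
      haveI : Fintype ↥(Bset j i) := Fintype.ofFinite _
      have hne : i ≠ j := fun h => by rw [h] at hij; omega
      have h1 := IH ↥(Bset j i) (G.induce (Bset j i)) (hBfree j i hne)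
      have h2 := hBclique j i hij
      have hjv : j.val < ω := j.2
      have hgoal : (G.induce (Bset j i)).cliqueNum + 2*p ≤ (ω - 1 - j.val) + (2*p+2) := by
        omega
      exact h1.mono (Nat.choose_le_choose _ hgoal)
    set CB : ∀ (j i : Fin ω), ↥(Bset j i) → Fin (b j) := fun j i =>
      if h : i.val < j.val then (hBcol j i h).some else fun _ => ⟨0, hbpos j⟩ with hCBdef
    have hCBprop : ∀ (j i : Fin ω) (h : i.val < j.val) (x y : ↥(Bset j i)),
        (G.induce (Bset j i)).Adj x y → CB j i x ≠ CB j i y := by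
      intro j i h x y hadj
      simp only [hCBdef, dif_pos h]
      exact (hBcol j i h).some.valid hadj
    set CBval : Fin ω → Fin ω → V → ℕ := fun j i u =>
      if h : u ∈ Bset j i then (CB j i ⟨u, h⟩ : ℕ) else 0 with hCBvaldef
    have hCBvalprop : ∀ (j i : Fin ω), i.val < j.val → ∀ a c : V, a ∈ Bset j i → c ∈ Bset j i →
        G.Adj a c → CBval j i a ≠ CBval j i c := by
      intro j i h a c ha hc hadj hEq2
      simp only [hCBvaldef, dif_pos ha, dif_pos hc] at hEq2
      have hadj' : (G.induce (Bset j i)).Adj ⟨a, ha⟩ ⟨c, hc⟩ := hadj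
      exact hCBprop j i h ⟨a, ha⟩ ⟨c, hc⟩ hadj' (Fin.val_injective hEq2)
    -- min elements and their properties
    have hlt : ∀ (u : V) (hu : u ∉ K)
        (h2 : ((NN u).erase ((NN u).min' (hNN u hu))).Nonempty),
        ((NN u).min' (hNN u hu)).val < (((NN u).erase ((NN u).min' (hNN u hu))).min' h2).val := by
      intro u hu h2
      set i := (NN u).min' (hNN u hu)
      set j := ((NN u).erase i).min' h2
      have hjmem : j ∈ (NN u).erase i := Finset.min'_mem _ _
      have hji : j ≠ i := (Finset.mem_erase.mp hjmem).1
      have hjNN : j ∈ NN u := (Finset.mem_erase.mp hjmem).2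
      have hle : i ≤ j := Finset.min'_le _ _ hjNN
      exact Fin.lt_def.mp (lt_of_le_of_ne hle (Ne.symm hji))
    have hmemB : ∀ (u : V) (hu : u ∉ K)
        (h2 : ((NN u).erase ((NN u).min' (hNN u hu))).Nonempty),
        u ∈ Bset (((NN u).erase ((NN u).min' (hNN u hu))).min' h2) ((NN u).min' (hNN u hu)) := by
      intro u hu h2
      set i := (NN u).min' (hNN u hu) with hi
      set j := ((NN u).erase i).min' h2 with hj
      have himem : i ∈ NN u := Finset.min'_mem _ _
      have hjmem : j ∈ (NN u).erase i := Finset.min'_mem _ _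
      refine ⟨hu, (hNNmem u i).mp himem, (hNNmem u j).mp (Finset.mem_erase.mp hjmem).2, ?_⟩
      intro k hkj hki
      by_contra hnadj
      have hkNN : k ∈ NN u := (hNNmem u k).mpr hnadj
      have hkerase : k ∈ (NN u).erase i := Finset.mem_erase.mpr ⟨hki, hkNN⟩
      have := Finset.min'_le _ _ hkerase
      rw [← hj] at this
      have := Fin.le_def.mp this
      omega
    -- the A-type property: if the erase is empty, u is adjacent to all e k except the min
    have hAadj : ∀ (u : V) (hu : u ∉ K),
        ¬ ((NN u).erase ((NN u).min' (hNN u hu))).Nonempty →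
        ∀ k : Fin ω, k ≠ (NN u).min' (hNN u hu) → G.Adj u (e k) := by
      intro u hu h2 k hk
      by_contra hnadj
      have hkNN : k ∈ NN u := (hNNmem u k).mpr hnadj
      exact h2 ⟨k, Finset.mem_erase.mpr ⟨hk, hkNN⟩⟩
    -- the coloring
    set col : V → (Fin ω ⊕ (Σ j : Fin ω, Fin j.val × Fin (b j))) := fun u =>
      if hu : u ∈ K then Sum.inl (EQ ⟨u, hu⟩)
      else
        if h2 : ((NN u).erase ((NN u).min' (hNN u hu))).Nonempty then
          Sum.inr ⟨((NN u).erase ((NN u).min' (hNN u hu))).min' h2,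
            (⟨((NN u).min' (hNN u hu)).val, hlt u hu h2⟩,
             CB (((NN u).erase ((NN u).min' (hNN u hu))).min' h2)
                ((NN u).min' (hNN u hu)) ⟨u, hmemB u hu h2⟩)⟩
        else Sum.inl ((NN u).min' (hNN u hu)) with hcoldef
    have hvalid : ∀ a c : V, G.Adj a c → col a ≠ col c := by
      intro a c hac hEq2
      have hane : a ≠ c := G.ne_of_adj hac
      by_cases ha : a ∈ K <;> by_cases hc : c ∈ K
      · rw [hcoldef] at hEq2
        simp only [dif_pos ha, dif_pos hc, Sum.inl.injEq] at hEq2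
        have := EQ.injective hEq2
        exact hane (congrArg Subtype.val this)
      · rw [hcoldef] at hEq2
        simp only [dif_pos ha, dif_neg hc] at hEq2
        by_cases h2 : ((NN c).erase ((NN c).min' (hNN c hc))).Nonempty
        · rw [dif_pos h2] at hEq2
          simp at hEq2
        · rw [dif_neg h2] at hEq2
          simp only [Sum.inl.injEq] at hEq2
          have hmin : (NN c).min' (hNN c hc) ∈ NN c := Finset.min'_mem _ _
          rw [hNNmem] at hmin
          rw [← hEq2, he_surj a ha] at hmin
          exact hmin hac.symm
      · rw [hcoldef] at hEq2
        simp only [dif_pos hc, dif_neg ha] at hEq2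
        by_cases h2 : ((NN a).erase ((NN a).min' (hNN a ha))).Nonempty
        · rw [dif_pos h2] at hEq2
          simp at hEq2
        · rw [dif_neg h2] at hEq2
          simp only [Sum.inl.injEq] at hEq2
          have hmin : (NN a).min' (hNN a ha) ∈ NN a := Finset.min'_mem _ _
          rw [hNNmem] at hmin
          rw [hEq2, he_surj c hc] at hmin
          exact hmin hac
      · rw [hcoldef] at hEq2
        simp only [dif_neg ha, dif_neg hc] at hEq2
        by_cases h2a : ((NN a).erase ((NN a).min' (hNN a ha))).Nonempty <;>
          by_cases h2c : ((NN c).erase ((NN c).min' (hNN c hc))).Nonempty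
        · -- both B-type
          rw [dif_pos h2a, dif_pos h2c] at hEq2
          simp only [Sum.inr.injEq] at hEq2
          have hj : (((NN a).erase ((NN a).min' (hNN a ha))).min' h2a)
              = (((NN c).erase ((NN c).min' (hNN c hc))).min' h2c) :=
            congrArg Sigma.fst hEq2
          have hi : ((NN a).min' (hNN a ha)).val = ((NN c).min' (hNN c hc)).val :=
            congrArg (fun z : (Σ j : Fin ω, Fin j.val × Fin (b j)) => z.2.1.val) hEq2
          have hcv : ((CB (((NN a).erase ((NN a).min' (hNN a ha))).min' h2a)
                ((NN a).min' (hNN a ha)) ⟨a, hmemB a ha h2a⟩ : Fin _) : ℕ)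
              = ((CB (((NN c).erase ((NN c).min' (hNN c hc))).min' h2c)
                ((NN c).min' (hNN c hc)) ⟨c, hmemB c hc h2c⟩ : Fin _) : ℕ) :=
            congrArg (fun z : (Σ j : Fin ω, Fin j.val × Fin (b j)) => (z.2.2 : ℕ)) hEq2
          have hiF : ((NN a).min' (hNN a ha)) = ((NN c).min' (hNN c hc)) := Fin.ext hi
          have hma : a ∈ Bset (((NN a).erase ((NN a).min' (hNN a ha))).min' h2a)
              ((NN a).min' (hNN a ha)) := hmemB a ha h2a
          have hmc0 : c ∈ Bset (((NN c).erase ((NN c).min' (hNN c hc))).min' h2c)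
              ((NN c).min' (hNN c hc)) := hmemB c hc h2c
          have hva : CBval (((NN a).erase ((NN a).min' (hNN a ha))).min' h2a)
              ((NN a).min' (hNN a ha)) a
              = ((CB (((NN a).erase ((NN a).min' (hNN a ha))).min' h2a)
                ((NN a).min' (hNN a ha)) ⟨a, hmemB a ha h2a⟩ : Fin _) : ℕ) := by
            simp only [hCBvaldef, dif_pos hma]
          have hvc : CBval (((NN c).erase ((NN c).min' (hNN c hc))).min' h2c)
              ((NN c).min' (hNN c hc)) c
              = ((CB (((NN c).erase ((NN c).min' (hNN c hc))).min' h2c)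
                ((NN c).min' (hNN c hc)) ⟨c, hmemB c hc h2c⟩ : Fin _) : ℕ) := by
            simp only [hCBvaldef, dif_pos hmc0]
          have h3 : CBval (((NN a).erase ((NN a).min' (hNN a ha))).min' h2a)
                ((NN a).min' (hNN a ha)) a
              = CBval (((NN c).erase ((NN c).min' (hNN c hc))).min' h2c)
                ((NN c).min' (hNN c hc)) c := by
            rw [hva, hvc, hcv]
          rw [← hj, ← hiF] at h3 hmc0
          exact hCBvalprop _ _ (hlt a ha h2a) a c hma hmc0 hac h3
        · rw [dif_pos h2a, dif_neg h2c] at hEq2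
          simp at hEq2
        · rw [dif_neg h2a, dif_pos h2c] at hEq2
          simp at hEq2
        · -- both A-type
          rw [dif_neg h2a, dif_neg h2c] at hEq2
          simp only [Sum.inl.injEq] at hEq2
          set i := (NN a).min' (hNN a ha) with hidef
          have hAa := hAadj a ha h2a
          have hAc := hAadj c hc h2c
          rw [← hEq2] at hAc
          -- build a clique of size ω + 1
          have heiK : e i ∈ K := he_mem i
          have hclq : G.IsClique (insert a (insert c (K.erase (e i))) : Finset V) := by
            intro x hx y hy hne
            simp only [Finset.coe_insert, Set.mem_insert_iff, Finset.mem_coe,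
              Finset.mem_erase] at hx hy
            have hKadj : ∀ z ∈ K, z ≠ e i → ∀ w, (∀ k : Fin ω, k ≠ i → G.Adj w (e k)) → G.Adj w z := by
              intro z hz hzi w hw
              have : e (EQ ⟨z, hz⟩) = z := he_surj z hz
              have hne2 : EQ ⟨z, hz⟩ ≠ i := fun h => hzi (by rw [← this, h])
              rw [← this]
              exact hw _ hne2
            rcases hx with rfl | rfl | ⟨hxei, hxK⟩
            · rcases hy with rfl | rfl | ⟨hyei, hyK⟩
              · exact absurd rfl hne
              · exact hac
              · exact hKadj y hyK hyei x hAa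
            · rcases hy with rfl | rfl | ⟨hyei, hyK⟩
              · exact hac.symm
              · exact absurd rfl hne
              · exact hKadj y hyK hyei x hAc
            · rcases hy with rfl | rfl | ⟨hyei, hyK⟩
              · exact (hKadj x hxK hxei y hAa).symm
              · exact (hKadj x hxK hxei y hAc).symm
              · exact hK.isClique hxK hyK hne
          have hcard : (insert a (insert c (K.erase (e i)))).card = ω + 1 := by
            have hcK : c ∉ K.erase (e i) := fun h => hc (Finset.mem_of_mem_erase h)
            have haK : a ∉ insert c (K.erase (e i)) := by
              simp only [Finset.mem_insert]
              rintro (rfl | h)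
              · exact hane rfl
              · exact ha (Finset.mem_of_mem_erase h)
            rw [Finset.card_insert_of_notMem haK, Finset.card_insert_of_notMem hcK,
              Finset.card_erase_of_mem heiK, hK.card_eq]
            have : 1 ≤ ω := by
              have := Finset.card_pos.mpr ⟨e i, heiK⟩
              rw [hK.card_eq] at this
              omega
            omega
          have := hclq.card_le_cliqueNum
          rw [hcard] at this
          omega
    -- assemble
    have C : G.Coloring (Fin ω ⊕ (Σ j : Fin ω, Fin j.val × Fin (b j))) :=
      Coloring.mk col (fun {a c} h => hvalid a c h)
    have hcolorable := C.colorable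
    have hcardeq : Fintype.card (Fin ω ⊕ (Σ j : Fin ω, Fin j.val × Fin (b j)))
        = (ω + 2*(p+1)).choose (2*(p+1)+1) := by
      rw [Fintype.card_sum, Fintype.card_sigma]
      simp only [Fintype.card_prod, Fintype.card_fin]
      have hsum : ∑ j : Fin ω, j.val * b j
          = ∑ j ∈ range ω, j * ((ω-1-j + (2*p+2)).choose (2*p+1)) := by
        rw [← Fin.sum_univ_eq_sum_range (fun j => j * ((ω-1-j + (2*p+2)).choose (2*p+1))) ω]
      rw [hsum, keyid (2*p) ω]
      congr 1 <;> omega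
    rw [hcardeq] at hcolorable
    have hfinal : (ω + 2*(p+1)).choose (2*(p+1)+1) = (G.cliqueNum + 2*(p+1)).choose (2*(p+1)+1) := by
      rw [hω]
    rw [← hfinal]
    exact hcolorable

theorem stmt_11 (p : ℕ) (hp : 1 ≤ p) (V : Type) [Fintype V] (G : SimpleGraph V)
    (hG : IsEmpty ((pK2 p ⊕g pathGraph 3) ↪g G)) :
    G.chromaticNumber ≤ (Nat.choose (G.cliqueNum + 2 * p) (2 * p + 1) : ℕ∞) := by
  exact (main_col p V G hG).chromaticNumber_le
end

section
/- Let p ≥ 1 be an integer. Every graph G that is (p+2)K₂-free and (pK₂ ∪ D)-free, where D is the diamond graph (K₄ with one edge removed), satisfies χ(G) ≤ C(ω(G)+2p, 2p+1) + C(ω(G)+2p−3, 2p−1), where C(a,b) denotes the binomial coefficient. -/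
open SimpleGraph

/-- The diamond graph: `K₄` with one edge removed. -/
def diamond : SimpleGraph (Fin 4) := (⊤ : SimpleGraph (Fin 4)).deleteEdges {s(0, 1)}

namespace Stmt12


/-- The bound function: level 0 is the (2K₂, diamond)-free bound, level p+1 the binomial bound. -/
def bnd : ℕ → ℕ → ℕ
  | 0, m => max m 3
  | p+1, m => Nat.choose (m + 2*(p+1)) (2*(p+1)+1) + Nat.choose (m + 2*(p+1) - 3) (2*(p+1)-1)

lemma bnd_succ (q m : ℕ) :
    bnd (q+1) m = Nat.choose (m + 2*q + 2) (2*q + 3) + Nat.choose (m + 2*q - 1) (2*q + 1) := by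
  simp only [bnd]
  have e1 : m + 2*(q+1) = m + 2*q + 2 := by omega
  have e2 : 2*(q+1) + 1 = 2*q + 3 := by omega
  have e3 : m + 2*(q+1) - 3 = m + 2*q - 1 := by omega
  have e4 : 2*(q+1) - 1 = 2*q + 1 := by omega
  rw [e3, e1, e2, e4]

lemma bnd_mono (p : ℕ) {m m' : ℕ} (h : m ≤ m') : bnd p m ≤ bnd p m' := by
  cases p with
  | zero => simp only [bnd]; omega
  | succ q =>
    rw [bnd_succ, bnd_succ]
    exact Nat.add_le_add (Nat.choose_le_choose _ (by omega)) (Nat.choose_le_choose _ (by omega))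

lemma hockey (r : ℕ) (n : ℕ) :
    ∑ j ∈ Finset.range n, Nat.choose (j + r) r = Nat.choose (n + r) (r+1) := by
  induction n with
  | zero => simp [Nat.choose_eq_zero_of_lt]
  | succ n ih =>
    rw [Finset.sum_range_succ, ih]
    have h2 : Nat.choose ((n+r)+1) (r+1) = Nat.choose (n+r) r + Nat.choose (n+r) (r+1) :=
      Nat.choose_succ_succ _ _
    have h1 : n + 1 + r = (n + r) + 1 := by omega
    rw [h1, h2]
    omega

lemma sum_max_eq (n : ℕ) (hn : 1 ≤ n) :
    ∑ j ∈ Finset.range n, max (j+2) 3 = Nat.choose (n+2) 2 := by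
  induction n with
  | zero => omega
  | succ n ih =>
    rcases Nat.eq_or_lt_of_le hn with h | h
    · simp [← h]
    · have hn' : 1 ≤ n := by omega
      rw [Finset.sum_range_succ, ih hn']
      have h2 : max (n + 2) 3 = n + 2 := by omega
      have hp : Nat.choose ((n+2)+1) 2 = Nat.choose (n+2) 1 + Nat.choose (n+2) 2 :=
        Nat.choose_succ_succ (n+2) 1
      rw [Nat.choose_one_right] at hp
      have h3 : n + 1 + 2 = (n + 2) + 1 := by omega
      rw [h2, h3, hp]
      omega

lemma keyD (p n : ℕ) :
    1 + (∑ j ∈ Finset.range n, bnd p (j+2)) + bnd (p+1) n ≤ bnd (p+1) (n+1) := by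
  cases p with
  | zero =>
    have hb1 : ∀ m, bnd 1 m = Nat.choose (m+2) 3 + (m - 1) := by
      intro m
      have := bnd_succ 0 m
      rw [this]
      have e1 : m + 2*0 + 2 = m + 2 := by omega
      have e2 : 2*0 + 3 = 3 := by omega
      have e3 : m + 2*0 - 1 = m - 1 := by omega
      have e4 : 2*0 + 1 = 1 := by omega
      rw [e1, e2, e3, e4, Nat.choose_one_right]
    rcases Nat.eq_zero_or_pos n with rfl | hn
    · simp [hb1, bnd]
    have hsum : ∑ j ∈ Finset.range n, bnd 0 (j+2) = ∑ j ∈ Finset.range n, max (j+2) 3 :=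
      Finset.sum_congr rfl fun j _ => by simp [bnd]
    rw [hsum, sum_max_eq n hn, hb1, hb1]
    have hp : Nat.choose ((n+2)+1) 3 = Nat.choose (n+2) 2 + Nat.choose (n+2) 3 :=
      Nat.choose_succ_succ (n+2) 2
    have h3 : n + 1 + 2 = (n + 2) + 1 := by omega
    rw [h3, hp]
    omega
  | succ q =>
    have hb : ∀ j, bnd (q+1) (j+2)
        = Nat.choose (j + 2*q + 4) (2*q+3) + Nat.choose (j + 2*q + 1) (2*q+1) := by
      intro j
      rw [bnd_succ]
      have e1 : j + 2 + 2*q + 2 = j + 2*q + 4 := by omega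
      have e2 : j + 2 + 2*q - 1 = j + 2*q + 1 := by omega
      rw [e1, e2]
    have hsum : ∑ j ∈ Finset.range n, bnd (q+1) (j+2)
        = (∑ j ∈ Finset.range n, Nat.choose (j + 2*q + 4) (2*q+3))
          + ∑ j ∈ Finset.range n, Nat.choose (j + 2*q + 1) (2*q+1) := by
      rw [← Finset.sum_add_distrib]; exact Finset.sum_congr rfl fun j _ => hb j
    have hs1 : 1 + ∑ j ∈ Finset.range n, Nat.choose (j + 2*q + 4) (2*q+3)
        = Nat.choose (n + 2*q + 4) (2*q+4) := by
      have hh := hockey (2*q+3) (n+1)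
      rw [Finset.sum_range_succ'] at hh
      have h0 : Nat.choose (0 + (2*q+3)) (2*q+3) = 1 := by
        rw [Nat.zero_add, Nat.choose_self]
      rw [h0] at hh
      have e : n + 1 + (2*q+3) = n + 2*q + 4 := by omega
      have e2 : (2*q+3) + 1 = 2*q + 4 := by omega
      rw [e, e2] at hh
      rw [← hh, Nat.add_comm]
      congr 1
      refine Finset.sum_congr rfl fun j _ => ?_
      have e3 : j + 1 + (2*q+3) = j + 2*q + 4 := by omega
      rw [e3]
    have hs2 : ∑ j ∈ Finset.range n, Nat.choose (j + 2*q + 1) (2*q+1)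
        = Nat.choose (n + 2*q + 1) (2*q+2) := by
      have hh := hockey (2*q+1) n
      have e : n + (2*q+1) = n + 2*q + 1 := by omega
      have e2 : (2*q+1) + 1 = 2*q + 2 := by omega
      rw [e, e2] at hh
      rw [← hh]
      refine Finset.sum_congr rfl fun j _ => ?_
      have e3 : j + (2*q+1) = j + 2*q + 1 := by omega
      rw [e3]
    have ht1 : bnd (q+1+1) n = Nat.choose (n + 2*q + 4) (2*q+5) + Nat.choose (n + 2*q + 1) (2*q+3) := by
      rw [bnd_succ]
      have e1 : n + 2*(q+1) + 2 = n + 2*q + 4 := by omega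
      have e2 : 2*(q+1) + 3 = 2*q + 5 := by omega
      have e3 : n + 2*(q+1) - 1 = n + 2*q + 1 := by omega
      have e4 : 2*(q+1) + 1 = 2*q + 3 := by omega
      rw [e3, e1, e2, e4]
    have ht2 : bnd (q+1+1) (n+1)
        = Nat.choose (n + 2*q + 5) (2*q+5) + Nat.choose (n + 2*q + 2) (2*q+3) := by
      rw [bnd_succ]
      have e1 : n + 1 + 2*(q+1) + 2 = n + 2*q + 5 := by omega
      have e2 : 2*(q+1) + 3 = 2*q + 5 := by omega
      have e3 : n + 1 + 2*(q+1) - 1 = n + 2*q + 2 := by omega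
      have e4 : 2*(q+1) + 1 = 2*q + 3 := by omega
      rw [e3, e1, e2, e4]
    have hp1 : Nat.choose (n + 2*q + 5) (2*q+5)
        = Nat.choose (n + 2*q + 4) (2*q+4) + Nat.choose (n + 2*q + 4) (2*q+5) := by
      have h2 : Nat.choose ((n+2*q+4)+1) ((2*q+4)+1)
          = Nat.choose (n+2*q+4) (2*q+4) + Nat.choose (n+2*q+4) ((2*q+4)+1) :=
        Nat.choose_succ_succ _ _
      have e1 : n + 2*q + 5 = (n + 2*q + 4) + 1 := by omega
      have e2 : 2*q + 5 = (2*q + 4) + 1 := by omega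
      rw [e1, e2, h2]
    have hp2 : Nat.choose (n + 2*q + 2) (2*q+3)
        = Nat.choose (n + 2*q + 1) (2*q+2) + Nat.choose (n + 2*q + 1) (2*q+3) := by
      have h2 : Nat.choose ((n+2*q+1)+1) ((2*q+2)+1)
          = Nat.choose (n+2*q+1) (2*q+2) + Nat.choose (n+2*q+1) ((2*q+2)+1) :=
        Nat.choose_succ_succ _ _
      have e1 : n + 2*q + 2 = (n + 2*q + 1) + 1 := by omega
      have e2 : 2*q + 3 = (2*q + 2) + 1 := by omega
      rw [e1, e2, h2]
    rw [hsum, ht1, ht2, hp1, hp2]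
    omega

lemma keyStep (p n : ℕ) :
    n + (∑ j ∈ Finset.range n, j * bnd p (n - j + 1)) ≤ bnd (p+1) n := by
  have href : ∑ j ∈ Finset.range n, j * bnd p (n - j + 1)
      = ∑ j ∈ Finset.range n, (n - 1 - j) * bnd p (j + 2) := by
    rw [← Finset.sum_range_reflect]
    refine Finset.sum_congr rfl fun j hj => ?_
    rw [Finset.mem_range] at hj
    have e2 : n - (n - 1 - j) + 1 = j + 2 := by omega
    rw [e2]
  rw [href]
  clear href
  induction n with
  | zero => simp
  | succ n ih =>
    have hlast : ∑ j ∈ Finset.range (n+1), (n + 1 - 1 - j) * bnd p (j + 2)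
        = ∑ j ∈ Finset.range n, ((n - 1 - j) * bnd p (j + 2) + bnd p (j+2)) := by
      rw [Finset.sum_range_succ]
      have h0 : (n + 1 - 1 - n) = 0 := by omega
      rw [h0, Nat.zero_mul, Nat.add_zero]
      refine Finset.sum_congr rfl fun j hj => ?_
      rw [Finset.mem_range] at hj
      have h1 : n + 1 - 1 - j = (n - 1 - j) + 1 := by omega
      rw [h1, Nat.succ_mul]
    rw [hlast, Finset.sum_add_distrib]
    have := keyD p n
    omega


@[simp] lemma pK2_adj {p : ℕ} {x y : Fin p × Fin 2} :
    (pK2 p).Adj x y ↔ x.1 = y.1 ∧ x.2 ≠ y.2 := Iff.rfl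

@[simp] lemma diamond_adj {x y : Fin 4} :
    diamond.Adj x y ↔ x ≠ y ∧ ¬ s(x, y) = s(0, 1) := by
  simp [diamond]

variable {V : Type} {G : SimpleGraph V}

@[simp] lemma sum_adj_inl_inl {α β : Type*} {A : SimpleGraph α} {B : SimpleGraph β} {a b : α} :
    (A ⊕g B).Adj (Sum.inl a) (Sum.inl b) ↔ A.Adj a b := Iff.rfl

@[simp] lemma sum_adj_inr_inr {α β : Type*} {A : SimpleGraph α} {B : SimpleGraph β} {a b : β} :
    (A ⊕g B).Adj (Sum.inr a) (Sum.inr b) ↔ B.Adj a b := Iff.rfl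

@[simp] lemma sum_adj_inl_inr {α β : Type*} {A : SimpleGraph α} {B : SimpleGraph β} {a : α} {b : β} :
    ¬ (A ⊕g B).Adj (Sum.inl a) (Sum.inr b) := by
  intro h; exact (Bool.false_ne_true h)

@[simp] lemma sum_adj_inr_inl {α β : Type*} {A : SimpleGraph α} {B : SimpleGraph β} {a : α} {b : β} :
    ¬ (A ⊕g B).Adj (Sum.inr b) (Sum.inl a) := by
  intro h; exact (Bool.false_ne_true h)

/-- From an induced 2K₂ configuration, derive a contradiction with 2K₂-freeness. -/
lemma no2K2 (h1 : IsEmpty (pK2 2 ↪g G)) {a b c d : V}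
    (hab : G.Adj a b) (hcd : G.Adj c d)
    (hac : ¬G.Adj a c) (had : ¬G.Adj a d) (hbc : ¬G.Adj b c) (hbd : ¬G.Adj b d)
    (hac' : a ≠ c) (had' : a ≠ d) (hbc' : b ≠ c) (hbd' : b ≠ d) : False := by
  have hab' : a ≠ b := hab.ne
  have hcd' : c ≠ d := hcd.ne
  refine h1.false ⟨⟨fun x => if x.1 = 0 then (if x.2 = 0 then a else b) else (if x.2 = 0 then c else d), ?_⟩, ?_⟩
  · intro x y hxy
    rcases x with ⟨i, j⟩; rcases y with ⟨i', j'⟩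
    fin_cases i <;> fin_cases i' <;> fin_cases j <;> fin_cases j' <;>
      simp_all <;> first | rfl | (exfalso; simp_all [eq_comm, G.ne_of_adj])
  · have hba := hab.symm
    have hdc := hcd.symm
    have hca : ¬G.Adj c a := fun h => hac h.symm
    have hda : ¬G.Adj d a := fun h => had h.symm
    have hcb : ¬G.Adj c b := fun h => hbc h.symm
    have hdb : ¬G.Adj d b := fun h => hbd h.symm
    intro x y
    erw [Function.Embedding.coeFn_mk]
    rcases x with ⟨i, j⟩; rcases y with ⟨i', j'⟩
    fin_cases i <;> fin_cases i' <;> fin_cases j <;> fin_cases j' <;>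
      simp_all [G.irrefl]



variable {V : Type} {G : SimpleGraph V}

/-- From an induced diamond configuration (missing edge a-b), contradiction with
    `(pK2 0 ⊕g diamond)`-freeness. -/
lemma noDiamond (h2 : IsEmpty ((pK2 0 ⊕g diamond) ↪g G)) {a b c d : V}
    (hab : ¬G.Adj a b) (hne : a ≠ b)
    (hac : G.Adj a c) (had : G.Adj a d) (hbc : G.Adj b c) (hbd : G.Adj b d)
    (hcd : G.Adj c d) : False := by
  have hca := hac.symm; have hda := had.symm; have hcb := hbc.symm
  have hdb := hbd.symm; have hdc := hcd.symm
  have hba : ¬ G.Adj b a := fun h => hab h.symm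
  have hac' := hac.ne; have had' := had.ne; have hbc' := hbc.ne
  have hbd' := hbd.ne; have hcd' := hcd.ne
  have hca' := hac'.symm; have hda' := had'.symm; have hcb' := hbc'.symm
  have hdb' := hbd'.symm; have hdc' := hcd'.symm
  have hne' := hne.symm
  refine h2.false ⟨⟨Sum.elim (fun x => x.1.elim0)
      (fun i => if i = 0 then a else if i = 1 then b else if i = 2 then c else d), ?_⟩, ?_⟩
  · intro x y hxy
    rcases x with x | x
    · exact x.1.elim0
    rcases y with y | y
    · exact y.1.elim0
    simp only [Sum.elim_inr] at hxy
    have : x = y := by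
      fin_cases x <;> fin_cases y <;> simp_all (config := {decide := true})
    rw [this]
  · intro x y
    erw [Function.Embedding.coeFn_mk]
    rcases x with x | x
    · exact x.1.elim0
    rcases y with y | y
    · exact y.1.elim0
    simp only [Sum.elim_inr, sum_adj_inr_inr]
    fin_cases x <;> fin_cases y <;> simp_all <;> decide

lemma induce_adj {S : Set V} {a b : S} : (G.induce S).Adj a b ↔ G.Adj ↑a ↑b := Iff.rfl

/-- Extend an induced `pK2 q` in the common non-neighbourhood of an edge `u-v` to `pK2 (q+1)`. -/
lemma extend_pK2 {q : ℕ} {u v : V} (huv : G.Adj u v) {S : Set V}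
    (hS : ∀ s ∈ S, ¬G.Adj u s ∧ ¬G.Adj v s ∧ s ≠ u ∧ s ≠ v)
    (e : pK2 q ↪g G.induce S) : Nonempty (pK2 (q+1) ↪g G) := by
  classical
  refine ⟨⟨⟨fun x => if h : (x.1 : ℕ) < q then (e (⟨x.1, h⟩, x.2) : V)
      else if x.2 = 0 then u else v, ?_⟩, ?_⟩⟩
  · intro x y hxy
    rcases x with ⟨i, j⟩; rcases y with ⟨i', j'⟩
    simp only at hxy
    by_cases hi : (i : ℕ) < q <;> by_cases hi' : (i' : ℕ) < q <;>
        simp only [hi, hi', dif_pos, dif_neg, not_false_iff] at hxy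
    · have h1 := e.injective (Subtype.coe_injective hxy)
      have h2 : ((i : ℕ), j) = ((i' : ℕ), j') :=
        congrArg (fun z : Fin q × Fin 2 => ((z.1 : ℕ), z.2)) h1
      rw [Prod.ext_iff] at h2
      exact Prod.ext (Fin.ext h2.1) h2.2
    · exfalso
      by_cases hj' : j' = 0
      · rw [if_pos hj'] at hxy
        exact (hS _ (e (⟨i, hi⟩, j)).2).2.2.1 hxy
      · rw [if_neg hj'] at hxy
        exact (hS _ (e (⟨i, hi⟩, j)).2).2.2.2 hxy
    · exfalso
      by_cases hj : j = 0
      · rw [if_pos hj] at hxy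
        exact (hS _ (e (⟨i', hi'⟩, j')).2).2.2.1 hxy.symm
      · rw [if_neg hj] at hxy
        exact (hS _ (e (⟨i', hi'⟩, j')).2).2.2.2 hxy.symm
    · have hii : i = i' := by
        have := i.isLt; have := i'.isLt; exact Fin.ext (by omega)
      by_cases hj : j = 0 <;> by_cases hj' : j' = 0
      · rw [hii, hj, hj']
      · exfalso; rw [if_pos hj, if_neg hj'] at hxy; exact huv.ne hxy
      · exfalso; rw [if_neg hj, if_pos hj'] at hxy; exact huv.ne hxy.symm
      · rw [if_neg hj, if_neg hj'] at hxy
        have : j = j' := by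
          have := j.isLt; have := j'.isLt
          have h0 : (j : ℕ) ≠ 0 := fun h => hj (Fin.ext h)
          have h0' : (j' : ℕ) ≠ 0 := fun h => hj' (Fin.ext h)
          exact Fin.ext (by omega)
        rw [hii, this]
  · intro x y
    erw [Function.Embedding.coeFn_mk]
    rcases x with ⟨i, j⟩; rcases y with ⟨i', j'⟩
    simp only [Function.Embedding.coeFn_mk, pK2_adj]
    by_cases hi : (i : ℕ) < q <;> by_cases hi' : (i' : ℕ) < q <;>
        simp only [hi, hi', dif_pos, dif_neg, not_false_iff]
    · rw [show G.Adj ↑(e (⟨i, hi⟩, j)) ↑(e (⟨i', hi'⟩, j')) ↔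
          (G.induce S).Adj (e (⟨i, hi⟩, j)) (e (⟨i', hi'⟩, j')) from Iff.rfl,
        e.map_rel_iff, pK2_adj]
      constructor
      · rintro ⟨h1, h2⟩
        have h3 : (i : ℕ) = (i' : ℕ) := congrArg (fun z : Fin q => (z : ℕ)) h1
        exact ⟨Fin.ext h3, h2⟩
      · rintro ⟨h1, h2⟩
        have h3 : (i : ℕ) = (i' : ℕ) := congrArg (fun z : Fin (q+1) => (z : ℕ)) h1
        exact ⟨Fin.ext h3, h2⟩
    · constructor
      · intro had
        exfalso
        by_cases hj' : j' = 0
        · rw [if_pos hj'] at had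
          exact (hS _ (e (⟨i, hi⟩, j)).2).1 had.symm
        · rw [if_neg hj'] at had
          exact (hS _ (e (⟨i, hi⟩, j)).2).2.1 had.symm
      · rintro ⟨h1, -⟩
        exact absurd (congrArg Fin.val h1) (by omega)
    · constructor
      · intro had
        exfalso
        by_cases hj : j = 0
        · rw [if_pos hj] at had
          exact (hS _ (e (⟨i', hi'⟩, j')).2).1 had
        · rw [if_neg hj] at had
          exact (hS _ (e (⟨i', hi'⟩, j')).2).2.1 had
      · rintro ⟨h1, -⟩
        exact absurd (congrArg Fin.val h1) (by omega)
    · have hii : i = i' := by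
        have := i.isLt; have := i'.isLt; exact Fin.ext (by omega)
      by_cases hj : j = 0 <;> by_cases hj' : j' = 0
      · rw [if_pos hj, if_pos hj']
        simp [hii, hj, hj', G.irrefl]
      · rw [if_pos hj, if_neg hj']
        have hjj' : j ≠ j' := fun h => hj' (h ▸ hj)
        simp [hii, hjj', huv]
      · rw [if_neg hj, if_pos hj']
        have hjj' : j ≠ j' := fun h => hj (h.symm ▸ hj')
        simp [hii, hjj', huv.symm]
      · rw [if_neg hj, if_neg hj']
        have : j = j' := by
          have := j.isLt; have := j'.isLt
          have h0 : (j : ℕ) ≠ 0 := fun h => hj (Fin.ext h)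
          have h0' : (j' : ℕ) ≠ 0 := fun h => hj' (Fin.ext h)
          exact Fin.ext (by omega)
        simp [hii, this, G.irrefl]

/-- Extend an induced `pK2 q ⊕g diamond` in the common non-neighbourhood of an edge `u-v`
    to `pK2 (q+1) ⊕g diamond`. -/
lemma extend_sum {q : ℕ} {u v : V} (huv : G.Adj u v) {S : Set V}
    (hS : ∀ s ∈ S, ¬G.Adj u s ∧ ¬G.Adj v s ∧ s ≠ u ∧ s ≠ v)
    (e : (pK2 q ⊕g diamond) ↪g G.induce S) :
    Nonempty ((pK2 (q+1) ⊕g diamond) ↪g G) := by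
  classical
  refine ⟨⟨⟨Sum.elim
      (fun x => if h : (x.1 : ℕ) < q then (e (Sum.inl (⟨x.1, h⟩, x.2)) : V)
        else if x.2 = 0 then u else v)
      (fun d => (e (Sum.inr d) : V)), ?_⟩, ?_⟩⟩
  · rintro (⟨i, j⟩ | d) (⟨i', j'⟩ | d') hxy <;> simp only [Sum.elim_inl, Sum.elim_inr] at hxy
    · by_cases hi : (i : ℕ) < q <;> by_cases hi' : (i' : ℕ) < q <;>
          simp only [hi, hi', dif_pos, dif_neg, not_false_iff] at hxy
      · have h1 := e.injective (Subtype.coe_injective hxy)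
        have h2 : ((i : ℕ), j) = ((i' : ℕ), j') := by
          injection h1 with h1'
          exact congrArg (fun z : Fin q × Fin 2 => ((z.1 : ℕ), z.2)) h1'
        rw [Prod.ext_iff] at h2
        have h4 : (i, j) = (i', j') := Prod.ext (Fin.ext h2.1) h2.2
        rw [h4]
      · exfalso
        by_cases hj' : j' = 0
        · rw [if_pos hj'] at hxy
          exact (hS _ (e (Sum.inl (⟨i, hi⟩, j))).2).2.2.1 hxy
        · rw [if_neg hj'] at hxy
          exact (hS _ (e (Sum.inl (⟨i, hi⟩, j))).2).2.2.2 hxy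
      · exfalso
        by_cases hj : j = 0
        · rw [if_pos hj] at hxy
          exact (hS _ (e (Sum.inl (⟨i', hi'⟩, j'))).2).2.2.1 hxy.symm
        · rw [if_neg hj] at hxy
          exact (hS _ (e (Sum.inl (⟨i', hi'⟩, j'))).2).2.2.2 hxy.symm
      · have hii : i = i' := by
          have := i.isLt; have := i'.isLt; exact Fin.ext (by omega)
        by_cases hj : j = 0 <;> by_cases hj' : j' = 0
        · rw [hii, hj, hj']
        · exfalso; rw [if_pos hj, if_neg hj'] at hxy; exact huv.ne hxy
        · exfalso; rw [if_neg hj, if_pos hj'] at hxy; exact huv.ne hxy.symm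
        · rw [if_neg hj, if_neg hj'] at hxy
          have : j = j' := by
            have := j.isLt; have := j'.isLt
            have h0 : (j : ℕ) ≠ 0 := fun h => hj (Fin.ext h)
            have h0' : (j' : ℕ) ≠ 0 := fun h => hj' (Fin.ext h)
            exact Fin.ext (by omega)
          rw [hii, this]
    · exfalso
      by_cases hi : (i : ℕ) < q
      · rw [dif_pos hi] at hxy
        exact Sum.inl_ne_inr (e.injective (Subtype.coe_injective hxy))
      · rw [dif_neg hi] at hxy
        by_cases hj : j = 0
        · rw [if_pos hj] at hxy
          exact (hS _ (e (Sum.inr d')).2).2.2.1 hxy.symm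
        · rw [if_neg hj] at hxy
          exact (hS _ (e (Sum.inr d')).2).2.2.2 hxy.symm
    · exfalso
      by_cases hi' : (i' : ℕ) < q
      · rw [dif_pos hi'] at hxy
        exact Sum.inr_ne_inl (e.injective (Subtype.coe_injective hxy))
      · rw [dif_neg hi'] at hxy
        by_cases hj' : j' = 0
        · rw [if_pos hj'] at hxy
          exact (hS _ (e (Sum.inr d)).2).2.2.1 hxy
        · rw [if_neg hj'] at hxy
          exact (hS _ (e (Sum.inr d)).2).2.2.2 hxy
    · have h1 := e.injective (Subtype.coe_injective hxy)
      injection h1 with h1'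
      rw [h1']
  · rintro (⟨i, j⟩ | d) (⟨i', j'⟩ | d') <;> erw [Function.Embedding.coeFn_mk] <;>
        simp only [Sum.elim_inl, Sum.elim_inr, Function.Embedding.coeFn_mk,
          sum_adj_inl_inl, sum_adj_inr_inr, pK2_adj]
    · by_cases hi : (i : ℕ) < q <;> by_cases hi' : (i' : ℕ) < q <;>
          simp only [hi, hi', dif_pos, dif_neg, not_false_iff]
      · rw [show G.Adj ↑(e (Sum.inl (⟨i, hi⟩, j))) ↑(e (Sum.inl (⟨i', hi'⟩, j'))) ↔
            (G.induce S).Adj (e (Sum.inl (⟨i, hi⟩, j))) (e (Sum.inl (⟨i', hi'⟩, j'))) from Iff.rfl,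
          e.map_rel_iff, sum_adj_inl_inl, pK2_adj]
        constructor
        · rintro ⟨h1, h2⟩
          have h3 : (i : ℕ) = (i' : ℕ) := congrArg (fun z : Fin q => (z : ℕ)) h1
          exact ⟨Fin.ext h3, h2⟩
        · rintro ⟨h1, h2⟩
          have h3 : (i : ℕ) = (i' : ℕ) := congrArg (fun z : Fin (q+1) => (z : ℕ)) h1
          exact ⟨Fin.ext h3, h2⟩
      · constructor
        · intro had
          exfalso
          by_cases hj' : j' = 0
          · rw [if_pos hj'] at had
            exact (hS _ (e (Sum.inl (⟨i, hi⟩, j))).2).1 had.symm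
          · rw [if_neg hj'] at had
            exact (hS _ (e (Sum.inl (⟨i, hi⟩, j))).2).2.1 had.symm
        · rintro ⟨h1, -⟩
          exact absurd (congrArg Fin.val h1) (by omega)
      · constructor
        · intro had
          exfalso
          by_cases hj : j = 0
          · rw [if_pos hj] at had
            exact (hS _ (e (Sum.inl (⟨i', hi'⟩, j'))).2).1 had
          · rw [if_neg hj] at had
            exact (hS _ (e (Sum.inl (⟨i', hi'⟩, j'))).2).2.1 had
        · rintro ⟨h1, -⟩
          exact absurd (congrArg Fin.val h1) (by omega)
      · have hii : i = i' := by
          have := i.isLt; have := i'.isLt; exact Fin.ext (by omega)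
        by_cases hj : j = 0 <;> by_cases hj' : j' = 0
        · rw [if_pos hj, if_pos hj']
          simp [hii, hj, hj', G.irrefl]
        · rw [if_pos hj, if_neg hj']
          have hjj' : j ≠ j' := fun h => hj' (h ▸ hj)
          simp [hii, hjj', huv]
        · rw [if_neg hj, if_pos hj']
          have hjj' : j ≠ j' := fun h => hj (h.symm ▸ hj')
          simp [hii, hjj', huv.symm]
        · rw [if_neg hj, if_neg hj']
          have : j = j' := by
            have := j.isLt; have := j'.isLt
            have h0 : (j : ℕ) ≠ 0 := fun h => hj (Fin.ext h)
            have h0' : (j' : ℕ) ≠ 0 := fun h => hj' (Fin.ext h)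
            exact Fin.ext (by omega)
          simp [hii, this, G.irrefl]
    · refine iff_of_false ?_ sum_adj_inl_inr
      by_cases hi : (i : ℕ) < q
      · rw [dif_pos hi]
        intro had
        have := e.map_rel_iff.mp (had : (G.induce S).Adj (e (Sum.inl (⟨i, hi⟩, j))) (e (Sum.inr d')))
        exact sum_adj_inl_inr this
      · rw [dif_neg hi]
        intro had
        by_cases hj : j = 0
        · rw [if_pos hj] at had
          exact (hS _ (e (Sum.inr d')).2).1 had
        · rw [if_neg hj] at had
          exact (hS _ (e (Sum.inr d')).2).2.1 had
    · refine iff_of_false ?_ sum_adj_inr_inl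
      by_cases hi' : (i' : ℕ) < q
      · rw [dif_pos hi']
        intro had
        have := e.map_rel_iff.mp (had : (G.induce S).Adj (e (Sum.inr d)) (e (Sum.inl (⟨i', hi'⟩, j'))))
        exact sum_adj_inr_inl this
      · rw [dif_neg hi']
        intro had
        by_cases hj' : j' = 0
        · rw [if_pos hj'] at had
          exact (hS _ (e (Sum.inr d)).2).1 had.symm
        · rw [if_neg hj'] at had
          exact (hS _ (e (Sum.inr d)).2).2.1 had.symm
    · rw [show G.Adj ↑(e (Sum.inr d)) ↑(e (Sum.inr d')) ↔
          (G.induce S).Adj (e (Sum.inr d)) (e (Sum.inr d')) from Iff.rfl,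
        e.map_rel_iff, sum_adj_inr_inr]

lemma clique_le {n : ℕ} {s : Finset V} [Fintype V] (h : G.IsNClique n s) : n ≤ G.cliqueNum := by
  have := SimpleGraph.IsClique.card_le_cliqueNum (G := G) (t := s) (tc := h.1)
  rwa [h.2] at this

/-- Base case: a (2K₂, diamond)-free graph is max(ω,3)-colorable. -/
lemma base (V : Type) [Fintype V] (G : SimpleGraph V)
    (h1 : IsEmpty (pK2 2 ↪g G)) (h2 : IsEmpty ((pK2 0 ⊕g diamond) ↪g G)) :
    G.Colorable (max G.cliqueNum 3) := by
  classical
  have notriangle : G.cliqueNum ≤ 2 → ∀ a b c : V, G.Adj a b → G.Adj a c → G.Adj b c → False := by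
    intro hw a b c hab hac hbc
    have hcl : G.IsNClique 3 {a, b, c} := by
      constructor
      · intro x hx y hy hxy
        simp only [Finset.coe_insert, Set.mem_insert_iff, Finset.coe_singleton,
          Set.mem_singleton_iff] at hx hy
        rcases hx with rfl | rfl | rfl <;> rcases hy with rfl | rfl | rfl <;>
          first | exact absurd rfl hxy | assumption | exact hab.symm | exact hac.symm | exact hbc.symm
      · rw [Finset.card_insert_of_notMem (by simp [hab.ne, hac.ne]),
          Finset.card_insert_of_notMem (by simp [hbc.ne]), Finset.card_singleton]
    have := clique_le hcl
    omega
  rcases le_or_gt G.cliqueNum 2 with hw | hw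
  · -- triangle-free case: 3 colors suffice
    refine Colorable.mono (le_max_right _ _) ?_
    by_cases hE : ∃ u v, G.Adj u v
    · obtain ⟨u, v, huv⟩ := hE
      have hnt : ∀ a b c : V, G.Adj a b → G.Adj a c → G.Adj b c → False :=
        notriangle hw
      refine ⟨SimpleGraph.Coloring.mk (fun x => if x = u then 0 else if x = v then 1
        else if G.Adj x u then 1 else if G.Adj x v then 0 else (2 : Fin 3)) ?_⟩
      intro x y hadj heq
      by_cases hxu : x = u
      · rw [if_pos hxu] at heq
        by_cases hyu : y = u
        · subst hxu; subst hyu; exact G.loopless.irrefl _ hadj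
        rw [if_neg hyu] at heq
        by_cases hyv : y = v
        · rw [if_pos hyv] at heq; exact absurd heq (by decide)
        rw [if_neg hyv] at heq
        by_cases hy1 : G.Adj y u
        · rw [if_pos hy1] at heq; exact absurd heq (by decide)
        · exact hy1 (hxu ▸ hadj.symm)
      rw [if_neg hxu] at heq
      by_cases hxv : x = v
      · rw [if_pos hxv] at heq
        by_cases hyu : y = u
        · rw [if_pos hyu] at heq; exact absurd heq (by decide)
        rw [if_neg hyu] at heq
        by_cases hyv : y = v
        · subst hxv; subst hyv; exact G.loopless.irrefl _ hadj
        rw [if_neg hyv] at heq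
        by_cases hy1 : G.Adj y u
        · exact hnt y u v hy1 (hxv ▸ hadj.symm) huv
        rw [if_neg hy1] at heq
        by_cases hy2 : G.Adj y v
        · rw [if_pos hy2] at heq; exact absurd heq (by decide)
        · exact hy2 (hxv ▸ hadj.symm)
      rw [if_neg hxv] at heq
      by_cases hyu : y = u
      · rw [if_pos hyu] at heq
        by_cases hx1 : G.Adj x u
        · rw [if_pos hx1] at heq; exact absurd heq (by decide)
        · exact hx1 (hyu ▸ hadj)
      rw [if_neg hyu] at heq
      by_cases hyv : y = v
      · rw [if_pos hyv] at heq
        by_cases hx1 : G.Adj x u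
        · exact hnt x u v hx1 (hyv ▸ hadj) huv
        rw [if_neg hx1] at heq
        by_cases hx2 : G.Adj x v
        · rw [if_pos hx2] at heq; exact absurd heq (by decide)
        · exact hx2 (hyv ▸ hadj)
      rw [if_neg hyv] at heq
      by_cases hx1 : G.Adj x u
      · by_cases hy1 : G.Adj y u
        · exact hnt x y u hadj hx1 hy1
        · rw [if_pos hx1, if_neg hy1] at heq
          by_cases hy2 : G.Adj y v
          · rw [if_pos hy2] at heq; exact absurd heq (by decide)
          · rw [if_neg hy2] at heq; exact absurd heq (by decide)
      · rw [if_neg hx1] at heq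
        by_cases hy1 : G.Adj y u
        · rw [if_pos hy1] at heq
          by_cases hx2 : G.Adj x v
          · rw [if_pos hx2] at heq; exact absurd heq (by decide)
          · rw [if_neg hx2] at heq; exact absurd heq (by decide)
        · rw [if_neg hy1] at heq
          by_cases hx2 : G.Adj x v
          · by_cases hy2 : G.Adj y v
            · exact hnt x y v hadj hx2 hy2
            · rw [if_pos hx2, if_neg hy2] at heq; exact absurd heq (by decide)
          · by_cases hy2 : G.Adj y v
            · rw [if_neg hx2, if_pos hy2] at heq; exact absurd heq (by decide)
            · exact no2K2 h1 hadj huv hx1 hx2 hy1 hy2 hxu hxv hyu hyv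
    · push_neg at hE
      exact ⟨SimpleGraph.Coloring.mk (fun _ => (0 : Fin 3)) fun {a b} hadj => absurd hadj (hE a b)⟩
  · -- ω ≥ 3 case
    obtain ⟨K, hK⟩ := G.exists_isNClique_cliqueNum
    have hKcard : K.card = G.cliqueNum := hK.2
    have hKclique := hK.1
    have hKcard3 : 3 ≤ K.card := by omega
    -- every vertex outside K has at most one neighbour in K
    have huniq : ∀ x, x ∉ K → (K.filter (fun k => G.Adj x k)).card ≤ 1 := by
      intro x hx
      by_contra hcard
      push_neg at hcard
      obtain ⟨a, ha, b, hb, hab⟩ := Finset.one_lt_card.mp hcard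
      rw [Finset.mem_filter] at ha hb
      -- a non-neighbour w of x in K
      have hmiss : (K.filter (fun k => ¬ G.Adj x k)).Nonempty := by
        by_contra hne
        rw [Finset.not_nonempty_iff_eq_empty, Finset.filter_eq_empty_iff] at hne
        have hall : ∀ k ∈ K, G.Adj x k := fun k hk => not_not.mp (hne hk)
        have : G.IsNClique (G.cliqueNum + 1) (insert x K) := by
          constructor
          · rw [Finset.coe_insert]
            exact hKclique.insert fun b hb _ => hall b (by exact_mod_cast hb)
          · rw [Finset.card_insert_of_notMem hx, hKcard]
        have := clique_le this
        omega
      obtain ⟨w, hw'⟩ := hmiss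
      rw [Finset.mem_filter] at hw'
      have hwa : w ≠ a := fun h => hw'.2 (h ▸ ha.2)
      have hwb : w ≠ b := fun h => hw'.2 (h ▸ hb.2)
      exact noDiamond h2 hw'.2 (fun h => hx (h ▸ hw'.1)) ha.2 hb.2
        (hKclique hw'.1 ha.1 hwa) (hKclique hw'.1 hb.1 hwb) (hKclique ha.1 hb.1 hab)
    -- build the coloring into ↥K
    have hKne : K.Nonempty := Finset.card_pos.mp (by omega)
    obtain ⟨φ, hφne, hφinj⟩ : ∃ φ : ↥K → ↥K, (∀ k, φ k ≠ k) ∧ Function.Injective φ := by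
      obtain ⟨e⟩ : Nonempty (↥K ≃ Fin K.card) := ⟨K.equivFin⟩
      refine ⟨fun k => e.symm (if h : (e k : ℕ) + 1 < K.card then ⟨(e k : ℕ) + 1, h⟩
        else ⟨0, by omega⟩), fun k => ?_, ?_⟩
      · intro hk
        have h1 := congrArg e hk
        rw [e.apply_symm_apply] at h1
        by_cases h : (e k : ℕ) + 1 < K.card
        · rw [dif_pos h] at h1
          have h3 : (e k : ℕ) + 1 = (e k : ℕ) := congrArg Fin.val h1
          omega
        · rw [dif_neg h] at h1
          have h3 : (0 : ℕ) = (e k : ℕ) := congrArg Fin.val h1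
          have := (e k).isLt
          omega
      · intro k l hkl
        have h2 := congrArg e hkl
        rw [e.apply_symm_apply, e.apply_symm_apply] at h2
        by_cases h : (e k : ℕ) + 1 < K.card <;> by_cases h' : (e l : ℕ) + 1 < K.card
        · rw [dif_pos h, dif_pos h'] at h2
          have h3 : (e k : ℕ) + 1 = (e l : ℕ) + 1 := congrArg Fin.val h2
          exact e.injective (Fin.ext (by omega))
        · rw [dif_pos h, dif_neg h'] at h2
          have h3 : (e k : ℕ) + 1 = 0 := congrArg Fin.val h2
          omega
        · rw [dif_neg h, dif_pos h'] at h2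
          have h3 : (0 : ℕ) = (e l : ℕ) + 1 := congrArg Fin.val h2
          omega
        · have := (e k).isLt; have := (e l).isLt
          exact e.injective (Fin.ext (by omega))
    set u0 : ↥K := ⟨hKne.choose, hKne.choose_spec⟩ with hu0
    -- the coloring function
    set c : V → ↥K := fun x =>
      if hx : x ∈ K then ⟨x, hx⟩
      else if h : (K.filter (fun k => G.Adj x k)).Nonempty
        then φ ⟨h.choose, (Finset.mem_filter.mp h.choose_spec).1⟩
        else u0 with hc
    -- uniqueness of anchors
    have hanchor : ∀ x (hx : x ∉ K) (h : (K.filter (fun k => G.Adj x k)).Nonempty),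
        ∀ k ∈ K, G.Adj x k → k = h.choose := by
      intro x hx h k hk hadj
      exact Finset.card_le_one.mp (huniq x hx) k (Finset.mem_filter.mpr ⟨hk, hadj⟩) _ h.choose_spec
    -- no P-P edges with same anchor / no P-F / no F-F edges
    have hPP : ∀ x y (hx : x ∉ K) (hy : y ∉ K), G.Adj x y →
        ∀ u : ↥K, (∀ k ∈ K, G.Adj x k → k = ↑u) → (∀ k ∈ K, G.Adj y k → k = ↑u) → False := by
      intro x y hx hy hadj u hux huy
      have hcard : 1 < (K.erase ↑u).card := by
        rw [Finset.card_erase_of_mem u.2]; omega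
      obtain ⟨a, ha, b, hb, hab⟩ := Finset.one_lt_card.mp hcard
      rw [Finset.mem_erase] at ha hb
      have hxa : ¬ G.Adj x a := fun h => ha.1 (hux a ha.2 h)
      have hxb : ¬ G.Adj x b := fun h => hb.1 (hux b hb.2 h)
      have hya : ¬ G.Adj y a := fun h => ha.1 (huy a ha.2 h)
      have hyb : ¬ G.Adj y b := fun h => hb.1 (huy b hb.2 h)
      exact no2K2 h1 hadj (hKclique ha.2 hb.2 hab) hxa hxb hya hyb
        (fun h => hx (h ▸ ha.2)) (fun h => hx (h ▸ hb.2))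
        (fun h => hy (h ▸ ha.2)) (fun h => hy (h ▸ hb.2))
    have hFedge : ∀ x y (hx : x ∉ K) (hy : y ∉ K), G.Adj x y →
        (∀ k ∈ K, ¬ G.Adj y k) → False := by
      intro x y hx hy hadj hyF
      by_cases hxf : (K.filter (fun k => G.Adj x k)).Nonempty
      · -- x has an anchor u; pick an edge in K avoiding it
        set u := hxf.choose
        have hu : u ∈ K := (Finset.mem_filter.mp hxf.choose_spec).1
        have hcard : 1 < (K.erase u).card := by
          rw [Finset.card_erase_of_mem hu]; omega
        obtain ⟨a, ha, b, hb, hab⟩ := Finset.one_lt_card.mp hcard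
        rw [Finset.mem_erase] at ha hb
        have hxa : ¬ G.Adj x a := fun h => ha.1 (hanchor x hx hxf a ha.2 h)
        have hxb : ¬ G.Adj x b := fun h => hb.1 (hanchor x hx hxf b hb.2 h)
        exact no2K2 h1 hadj (hKclique ha.2 hb.2 hab) hxa hxb (hyF a ha.2) (hyF b hb.2)
          (fun h => hx (h ▸ ha.2)) (fun h => hx (h ▸ hb.2))
          (fun h => hy (h ▸ ha.2)) (fun h => hy (h ▸ hb.2))
      · -- x also has no K-neighbours
        rw [Finset.not_nonempty_iff_eq_empty, Finset.filter_eq_empty_iff] at hxf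
        obtain ⟨a, ha, b, hb, hab⟩ := Finset.one_lt_card.mp (show 1 < K.card by omega)
        exact no2K2 h1 hadj (hKclique ha hb hab) (hxf ha) (hxf hb) (hyF a ha) (hyF b hb)
          (fun h => hx (h ▸ ha)) (fun h => hx (h ▸ hb))
          (fun h => hy (h ▸ ha)) (fun h => hy (h ▸ hb))
    have hvalid : ∀ {x y : V}, G.Adj x y → c x ≠ c y := by
      intro x y hadj heq
      by_cases hx : x ∈ K <;> by_cases hy : y ∈ K
      · rw [hc] at heq
        simp only [dif_pos hx, dif_pos hy] at heq
        have hxy : x = y := congrArg Subtype.val heq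
        subst hxy
        exact G.loopless.irrefl x hadj
      · rw [hc] at heq
        simp only [dif_pos hx, dif_neg hy] at heq
        by_cases hyf : (K.filter (fun k => G.Adj y k)).Nonempty
        · rw [dif_pos hyf] at heq
          have hxe : x = ↑(hyf.choose) := by
            exact hanchor y hy hyf x hx hadj.symm
          have : (⟨x, hx⟩ : ↥K) = ⟨hyf.choose, (Finset.mem_filter.mp hyf.choose_spec).1⟩ :=
            Subtype.ext hxe
          rw [this] at heq
          exact hφne _ heq.symm
        · rw [Finset.not_nonempty_iff_eq_empty, Finset.filter_eq_empty_iff] at hyf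
          exact hyf hx hadj.symm
      · rw [hc] at heq
        simp only [dif_neg hx, dif_pos hy] at heq
        by_cases hxf : (K.filter (fun k => G.Adj x k)).Nonempty
        · rw [dif_pos hxf] at heq
          have hye : y = ↑(hxf.choose) := hanchor x hx hxf y hy hadj
          have : (⟨y, hy⟩ : ↥K) = ⟨hxf.choose, (Finset.mem_filter.mp hxf.choose_spec).1⟩ :=
            Subtype.ext hye
          rw [this] at heq
          exact hφne _ heq
        · rw [Finset.not_nonempty_iff_eq_empty, Finset.filter_eq_empty_iff] at hxf
          exact hxf hy hadj
      · rw [hc] at heq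
        simp only [dif_neg hx, dif_neg hy] at heq
        by_cases hxf : (K.filter (fun k => G.Adj x k)).Nonempty <;>
          by_cases hyf : (K.filter (fun k => G.Adj y k)).Nonempty
        · rw [dif_pos hxf, dif_pos hyf] at heq
          have := hφinj heq
          have hanch : (hxf.choose : V) = (hyf.choose : V) := congrArg Subtype.val this
          refine hPP x y hx hy hadj ⟨hxf.choose, (Finset.mem_filter.mp hxf.choose_spec).1⟩
            (fun k hk ha => hanchor x hx hxf k hk ha) (fun k hk ha => ?_)
          rw [hanchor y hy hyf k hk ha]
          exact hanch.symm
        · rw [Finset.not_nonempty_iff_eq_empty, Finset.filter_eq_empty_iff] at hyf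
          exact hFedge x y hx hy hadj hyf
        · rw [Finset.not_nonempty_iff_eq_empty, Finset.filter_eq_empty_iff] at hxf
          exact hFedge y x hy hx hadj.symm hxf
        · rw [Finset.not_nonempty_iff_eq_empty, Finset.filter_eq_empty_iff] at hyf
          exact hFedge x y hx hy hadj hyf
    have hcol : G.Colorable (Fintype.card ↥K) := (SimpleGraph.Coloring.mk c hvalid).colorable
    rw [Fintype.card_coe, hKcard] at hcol
    exact hcol.mono (le_max_left _ _)


lemma induced_cliqueNum_bound [Fintype V] (S : Set V) [Fintype ↥S] (B : Finset V)
    (hB : ∀ b ∈ B, ∀ x ∈ S, G.Adj x b) (hBclique : G.IsClique (B : Set V))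
    (hdisj : ∀ x ∈ S, x ∉ B) :
    (G.induce S).cliqueNum + B.card ≤ G.cliqueNum := by
  classical
  obtain ⟨C, hC⟩ := (G.induce S).exists_isNClique_cliqueNum
  set C' : Finset V := C.image Subtype.val with hC'
  have hC'card : C'.card = C.card := Finset.card_image_of_injective _ Subtype.val_injective
  have hCmem : ∀ a ∈ C', a ∈ S := by
    intro a ha
    rw [hC', Finset.mem_image] at ha
    obtain ⟨a₀, -, rfl⟩ := ha
    exact a₀.2
  have hdisj2 : Disjoint C' B := by
    rw [Finset.disjoint_left]
    intro a ha hab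
    exact hdisj a (hCmem a ha) hab
  have hclique : G.IsClique ((C' ∪ B : Finset V) : Set V) := by
    intro a ha b hb hne
    rw [Finset.coe_union, Set.mem_union] at ha hb
    rcases ha with ha | ha <;> rcases hb with hb | hb
    · rw [Finset.mem_coe, hC', Finset.mem_image] at ha hb
      obtain ⟨a₀, ha₀, rfl⟩ := ha
      obtain ⟨b₀, hb₀, rfl⟩ := hb
      have hne₀ : a₀ ≠ b₀ := fun h => hne (congrArg Subtype.val h)
      exact hC.1 (Finset.mem_coe.mpr ha₀) (Finset.mem_coe.mpr hb₀) hne₀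
    · exact hB b hb a (hCmem a ha)
    · exact (hB a ha b (hCmem b hb)).symm
    · exact hBclique ha hb hne
  have hle := clique_le (G := G) (n := (C' ∪ B).card) (s := C' ∪ B) ⟨hclique, rfl⟩
  rw [Finset.card_union_of_disjoint hdisj2, hC'card, hC.2] at hle
  exact hle

theorem main : ∀ (p : ℕ) (V : Type) [Fintype V] (G : SimpleGraph V),
    IsEmpty (pK2 (p + 2) ↪g G) → IsEmpty ((pK2 p ⊕g diamond) ↪g G) →
    G.Colorable (bnd p G.cliqueNum) := by
  intro p
  induction p with
  | zero =>
    intro V _ G h1 h2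
    have hb := base V G h1 h2
    simpa only [bnd] using hb
  | succ p ih =>
    intro V instV G h1 h2
    classical
    obtain ⟨K, hK⟩ := G.exists_isNClique_cliqueNum
    have hKcard : K.card = G.cliqueNum := hK.2
    have hKclique := hK.1
    -- enumeration of K
    set vtx : Fin K.card → V := fun i => ((K.equivFin.symm i : ↥K) : V) with hvtx
    have hvtx_mem : ∀ i, vtx i ∈ K := fun i => (K.equivFin.symm i).2
    have hvtx_inj : Function.Injective vtx := fun a b h =>
      K.equivFin.symm.injective (Subtype.ext h)
    have hvtx_idx : ∀ k (hk : k ∈ K), vtx (K.equivFin ⟨k, hk⟩) = k := by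
      intro k hk
      simp only [hvtx, Equiv.symm_apply_apply]
    -- the missing-index sets
    set Mi : V → Finset (Fin K.card) := fun x =>
      Finset.univ.filter (fun i => ¬ G.Adj x (vtx i)) with hMi
    have hMi_mem : ∀ x i, i ∈ Mi x ↔ ¬ G.Adj x (vtx i) := by
      intro x i
      simp only [hMi, Finset.mem_filter, Finset.mem_univ, true_and]
    have hMiNE : ∀ x, x ∉ K → (Mi x).Nonempty := by
      intro x hx
      by_contra h
      rw [Finset.not_nonempty_iff_eq_empty] at h
      have hall : ∀ k ∈ K, G.Adj x k := by
        intro k hk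
        by_contra hna
        have hmem : K.equivFin ⟨k, hk⟩ ∈ Mi x := by
          rw [hMi_mem, hvtx_idx]
          exact hna
        rw [h] at hmem
        exact absurd hmem (Finset.notMem_empty _)
      have hcl : G.IsNClique (G.cliqueNum + 1) (insert x K) := by
        constructor
        · rw [Finset.coe_insert]
          exact hKclique.insert fun b hb _ => hall b (by exact_mod_cast hb)
        · rw [Finset.card_insert_of_notMem hx, hKcard]
      have := clique_le hcl
      omega
    -- adjacency to all clique vertices except one, for Q-classes
    have hQadj : ∀ x w, x ∉ K → Mi x = {w} → ∀ k ∈ K, k ≠ vtx w → G.Adj x k := by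
      intro x w hx hM k hk hkw
      by_contra hna
      have hmem : K.equivFin ⟨k, hk⟩ ∈ Mi x := by
        rw [hMi_mem, hvtx_idx]
        exact hna
      rw [hM, Finset.mem_singleton] at hmem
      exact hkw (by rw [← hvtx_idx k hk, hmem])
    -- Q-class edges are impossible
    have hQQ : ∀ x y, x ∉ K → y ∉ K → G.Adj x y → ∀ w, Mi x = {w} → Mi y = {w} → False := by
      intro x y hx hy hadj w hMx hMy
      have hKpos : 0 < K.card := lt_of_le_of_lt (Nat.zero_le _) w.isLt
      have hxy : x ≠ y := hadj.ne
      set s : Finset V := insert x (insert y (K.erase (vtx w))) with hs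
      have hclq : G.IsNClique (K.card + 1) s := by
        constructor
        · intro a ha b hb hne
          rw [hs, Finset.coe_insert, Finset.coe_insert] at ha hb
          simp only [Set.mem_insert_iff, Finset.mem_coe, Finset.mem_erase] at ha hb
          rcases ha with rfl | rfl | ha <;> rcases hb with rfl | rfl | hb
          · exact absurd rfl hne
          · exact hadj
          · exact hQadj a w hx hMx b hb.2 hb.1
          · exact hadj.symm
          · exact absurd rfl hne
          · exact hQadj a w hy hMy b hb.2 hb.1
          · exact (hQadj b w hx hMx a ha.2 ha.1).symm
          · exact (hQadj b w hy hMy a ha.2 ha.1).symm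
          · exact hKclique ha.2 hb.2 hne
        · rw [hs, Finset.card_insert_of_notMem, Finset.card_insert_of_notMem,
            Finset.card_erase_of_mem (hvtx_mem w)]
          · omega
          · intro hmem
            exact hy (Finset.mem_of_mem_erase hmem)
          · intro hmem
            rw [Finset.mem_insert] at hmem
            rcases hmem with rfl | hmem
            · exact hxy rfl
            · exact hx (Finset.mem_of_mem_erase hmem)
      have := clique_le hclq
      omega
    -- the class sets
    set S : Fin K.card → Fin K.card → Set V := fun i j =>
      {x | x ∉ K ∧ i ∈ Mi x ∧ j ∈ Mi x ∧ ∀ k ∈ Mi x, k = i ∨ (j:ℕ) ≤ (k:ℕ)} with hSdef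
    have hSnonadj : ∀ i j : Fin K.card, (i:ℕ) < (j:ℕ) →
        ∀ s ∈ S i j, ¬G.Adj (vtx i) s ∧ ¬G.Adj (vtx j) s ∧ s ≠ vtx i ∧ s ≠ vtx j := by
      intro i j hij s hs
      obtain ⟨hsK, hiM, hjM, -⟩ := hs
      rw [hMi_mem] at hiM hjM
      exact ⟨fun h => hiM h.symm, fun h => hjM h.symm,
        fun h => hsK (h ▸ hvtx_mem i), fun h => hsK (h ▸ hvtx_mem j)⟩
    have hSadjK : ∀ i j : Fin K.card, ∀ x ∈ S i j, ∀ k : Fin K.card,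
        (k:ℕ) < (j:ℕ) → k ≠ i → G.Adj x (vtx k) := by
      intro i j x hx k hkj hki
      obtain ⟨-, -, -, hmin⟩ := hx
      by_contra hna
      have hkM : k ∈ Mi x := (hMi_mem x k).mpr hna
      rcases hmin k hkM with rfl | h
      · exact hki rfl
      · omega
    -- classification of non-K vertices with ≥ 2 missing indices
    have hclass : ∀ x, x ∉ K → ¬ (Mi x).card = 1 →
        ∃ c : Fin K.card × Fin K.card, ((c.1:ℕ) < (c.2:ℕ)) ∧ x ∈ S c.1 c.2 := by
      intro x hx hq
      have hne := hMiNE x hx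
      have hpos := Finset.card_pos.mpr hne
      have hcard2 : 2 ≤ (Mi x).card := by omega
      set i := (Mi x).min' hne with hi_def
      have hi : i ∈ Mi x := Finset.min'_mem _ _
      have herase : ((Mi x).erase i).Nonempty := by
        rw [← Finset.card_pos, Finset.card_erase_of_mem hi]
        omega
      set j := ((Mi x).erase i).min' herase with hj_def
      have hj' : j ∈ (Mi x).erase i := Finset.min'_mem _ _
      have hjM : j ∈ Mi x := Finset.mem_of_mem_erase hj'
      have hji : j ≠ i := Finset.ne_of_mem_erase hj'
      have hij : (i:ℕ) < (j:ℕ) := by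
        have hle : i ≤ j := Finset.min'_le _ _ hjM
        have : (i:ℕ) ≤ (j:ℕ) := hle
        have : (i:ℕ) ≠ (j:ℕ) := fun h => hji (Fin.ext h.symm)
        omega
      refine ⟨(i, j), hij, hx, hi, hjM, ?_⟩
      intro k hk
      by_cases hki : k = i
      · exact Or.inl hki
      · refine Or.inr ?_
        exact Finset.min'_le _ _ (Finset.mem_erase.mpr ⟨hki, hk⟩)
    -- palette sizes
    set pal : Fin K.card × Fin K.card → ℕ := fun c =>
      if (c.1:ℕ) < (c.2:ℕ) then bnd p (K.card - (c.2:ℕ) + 1) else 0 with hpal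
    -- colorability of each class
    have hcolS : ∀ c : Fin K.card × Fin K.card, ((c.1:ℕ) < (c.2:ℕ)) →
        (G.induce (S c.1 c.2)).Colorable (pal c) := by
      intro c hc
      letI : Fintype ↥(S c.1 c.2) := Fintype.ofFinite _
      have hedge : G.Adj (vtx c.1) (vtx c.2) := by
        refine hKclique (hvtx_mem _) (hvtx_mem _) fun h => ?_
        have := hvtx_inj h
        rw [this] at hc
        omega
      have hSp := hSnonadj c.1 c.2 hc
      have f1 : IsEmpty (pK2 (p + 2) ↪g G.induce (S c.1 c.2)) :=
        ⟨fun e => h1.false (extend_pK2 hedge hSp e).some⟩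
      have f2 : IsEmpty ((pK2 p ⊕g diamond) ↪g G.induce (S c.1 c.2)) :=
        ⟨fun e => h2.false (extend_sum hedge hSp e).some⟩
      have hcol := ih (↥(S c.1 c.2)) (G.induce (S c.1 c.2)) f1 f2
      -- bound the clique number of the class
      have hBsub : ∀ k : Fin K.card, k ∈ (Finset.Iio c.2).erase c.1 →
          ((k:ℕ) < (c.2:ℕ) ∧ k ≠ c.1) := by
        intro k hk
        rw [Finset.mem_erase, Finset.mem_Iio] at hk
        exact ⟨hk.2, hk.1⟩
      have hbound := induced_cliqueNum_bound (G := G) (S c.1 c.2)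
        (((Finset.Iio c.2).erase c.1).image vtx)
        (by
          intro b hb x hx
          rw [Finset.mem_image] at hb
          obtain ⟨k, hk, rfl⟩ := hb
          exact hSadjK c.1 c.2 x hx k (hBsub k hk).1 (hBsub k hk).2)
        (by
          intro a ha b hb hne
          rw [Finset.mem_coe, Finset.mem_image] at ha hb
          obtain ⟨k, -, rfl⟩ := ha
          obtain ⟨l, -, rfl⟩ := hb
          exact hKclique (hvtx_mem k) (hvtx_mem l) hne)
        (by
          intro x hx hmem
          rw [Finset.mem_image] at hmem
          obtain ⟨k, -, rfl⟩ := hmem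
          exact hx.1 (hvtx_mem k))
      have hBcard : (((Finset.Iio c.2).erase c.1).image vtx).card = (c.2:ℕ) - 1 := by
        rw [Finset.card_image_of_injective _ hvtx_inj,
          Finset.card_erase_of_mem (Finset.mem_Iio.mpr (Fin.lt_def.mpr hc)), Fin.card_Iio]
      rw [hBcard] at hbound
      rw [← hKcard] at hbound
      have hc2 : (c.2 : ℕ) < K.card := c.2.isLt
      have hmono : bnd p (G.induce (S c.1 c.2)).cliqueNum ≤ pal c := by
        rw [hpal]
        simp only [if_pos hc]
        exact bnd_mono p (by omega)
      exact hcol.mono hmono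
    -- pick colorings
    have Cc : ∀ c : Fin K.card × Fin K.card, ((c.1:ℕ) < (c.2:ℕ)) →
        (G.induce (S c.1 c.2)).Coloring (Fin (pal c)) := fun c hc => (hcolS c hc).some
    -- the global coloring
    set col : V → (Fin K.card ⊕ (Σ c : Fin K.card × Fin K.card, Fin (pal c))) := fun x =>
      if hx : x ∈ K then Sum.inl (K.equivFin ⟨x, hx⟩)
      else if hq : (Mi x).card = 1 then
        Sum.inl ((Mi x).min' (Finset.card_pos.mp (by rw [hq]; exact Nat.one_pos)))
      else
        Sum.inr ⟨(hclass x hx hq).choose,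
          Cc (hclass x hx hq).choose (hclass x hx hq).choose_spec.1
            ⟨x, (hclass x hx hq).choose_spec.2⟩⟩ with hcol_def
    have hcol1 : ∀ x (hx : x ∈ K), col x = Sum.inl (K.equivFin ⟨x, hx⟩) := by
      intro x hx
      simp only [hcol_def, dif_pos hx]
    have hcol2 : ∀ x, x ∉ K → (Mi x).card = 1 → ∃ w, Mi x = {w} ∧ col x = Sum.inl w := by
      intro x hx hq
      obtain ⟨w, hw⟩ := Finset.card_eq_one.mp hq
      refine ⟨w, hw, ?_⟩
      simp only [hcol_def, dif_neg hx, dif_pos hq]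
      congr 1
      have hmm : (Mi x).min' (Finset.card_pos.mp (by rw [hq]; exact Nat.one_pos)) ∈ Mi x :=
        Finset.min'_mem _ _
      have hwmem : w ∈ Mi x := by rw [hw]; exact Finset.mem_singleton_self _
      exact Finset.card_le_one.mp (le_of_eq hq) _ hmm _ hwmem
    have hcol3 : ∀ x (hx : x ∉ K) (hq : ¬ (Mi x).card = 1),
        ∃ (c : Fin K.card × Fin K.card) (hc : (c.1:ℕ) < (c.2:ℕ)) (hxS : x ∈ S c.1 c.2),
          col x = Sum.inr ⟨c, Cc c hc ⟨x, hxS⟩⟩ := by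
      intro x hx hq
      refine ⟨(hclass x hx hq).choose, (hclass x hx hq).choose_spec.1,
        (hclass x hx hq).choose_spec.2, ?_⟩
      simp only [hcol_def, dif_neg hx, dif_neg hq]
    -- validity
    have hvalid : ∀ {x y : V}, G.Adj x y → col x ≠ col y := by
      intro x y hadj heq
      by_cases hx : x ∈ K <;> by_cases hy : y ∈ K
      · rw [hcol1 x hx, hcol1 y hy] at heq
        have h2 : (⟨x, hx⟩ : ↥K) = ⟨y, hy⟩ :=
          K.equivFin.injective (Sum.inl.inj heq)
        have : x = y := congrArg Subtype.val h2
        exact hadj.ne this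
      · by_cases hq : (Mi y).card = 1
        · obtain ⟨w, hMy, hcy⟩ := hcol2 y hy hq
          rw [hcol1 x hx, hcy] at heq
          have hw : K.equivFin ⟨x, hx⟩ = w := Sum.inl.inj heq
          have hwM : w ∈ Mi y := by rw [hMy]; exact Finset.mem_singleton_self _
          rw [hMi_mem] at hwM
          rw [← hw, hvtx_idx x hx] at hwM
          exact hwM hadj.symm
        · obtain ⟨c, hc, hxS, hcy⟩ := hcol3 y hy hq
          rw [hcol1 x hx, hcy] at heq
          exact Sum.inl_ne_inr heq
      · by_cases hq : (Mi x).card = 1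
        · obtain ⟨w, hMx, hcx⟩ := hcol2 x hx hq
          rw [hcol1 y hy, hcx] at heq
          have hw : w = K.equivFin ⟨y, hy⟩ := Sum.inl.inj heq
          have hwM : w ∈ Mi x := by rw [hMx]; exact Finset.mem_singleton_self _
          rw [hMi_mem] at hwM
          rw [hw, hvtx_idx y hy] at hwM
          exact hwM hadj
        · obtain ⟨c, hc, hxS, hcx⟩ := hcol3 x hx hq
          rw [hcol1 y hy, hcx] at heq
          exact Sum.inr_ne_inl heq
      · by_cases hqx : (Mi x).card = 1 <;> by_cases hqy : (Mi y).card = 1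
        · obtain ⟨wx, hMx, hcx⟩ := hcol2 x hx hqx
          obtain ⟨wy, hMy, hcy⟩ := hcol2 y hy hqy
          rw [hcx, hcy] at heq
          have hw : wx = wy := Sum.inl.inj heq
          exact hQQ x y hx hy hadj wy (hw ▸ hMx) hMy
        · obtain ⟨wx, hMx, hcx⟩ := hcol2 x hx hqx
          obtain ⟨c, hc, hyS, hcy⟩ := hcol3 y hy hqy
          rw [hcx, hcy] at heq
          exact Sum.inl_ne_inr heq
        · obtain ⟨c, hc, hxS, hcx⟩ := hcol3 x hx hqx
          obtain ⟨wy, hMy, hcy⟩ := hcol2 y hy hqy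
          rw [hcx, hcy] at heq
          exact Sum.inr_ne_inl heq
        · obtain ⟨cx, hcx', hxS, hcx⟩ := hcol3 x hx hqx
          obtain ⟨cy, hcy', hyS, hcy⟩ := hcol3 y hy hqy
          rw [hcx, hcy] at heq
          have hsig := Sum.inr.inj heq
          injection hsig with hpair hheq
          subst hpair
          have hval : Cc cx hcx' ⟨x, hxS⟩ = Cc cx hcy' ⟨y, hyS⟩ := eq_of_heq hheq
          have hadj' : (G.induce (S cx.1 cx.2)).Adj ⟨x, hxS⟩ ⟨y, hyS⟩ := hadj
          exact (Cc cx hcx').valid hadj' hval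
    -- count colors
    have hcolorable : G.Colorable
        (Fintype.card (Fin K.card ⊕ (Σ c : Fin K.card × Fin K.card, Fin (pal c)))) :=
      (SimpleGraph.Coloring.mk col hvalid).colorable
    have hcardT : Fintype.card (Fin K.card ⊕ (Σ c : Fin K.card × Fin K.card, Fin (pal c)))
        = K.card + ∑ j ∈ Finset.range K.card, j * bnd p (K.card - j + 1) := by
      rw [Fintype.card_sum, Fintype.card_fin, Fintype.card_sigma]
      congr 1
      calc ∑ c : Fin K.card × Fin K.card, Fintype.card (Fin (pal c))
          = ∑ c : Fin K.card × Fin K.card, pal c := by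
            refine Finset.sum_congr rfl fun c _ => Fintype.card_fin _
        _ = ∑ j : Fin K.card, ∑ i : Fin K.card, pal (i, j) := Fintype.sum_prod_type_right _
        _ = ∑ j : Fin K.card, (j:ℕ) * bnd p (K.card - (j:ℕ) + 1) := by
            refine Finset.sum_congr rfl fun j _ => ?_
            rw [hpal]
            simp only []
            rw [Finset.sum_ite, Finset.sum_const, Finset.sum_const_zero, Nat.add_zero]
            have hfil : (Finset.univ.filter (fun i : Fin K.card => (i:ℕ) < (j:ℕ)))
                = Finset.Iio j := by
              ext k
              simp only [Finset.mem_filter, Finset.mem_univ, true_and, Finset.mem_Iio]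
              exact Iff.symm Fin.lt_def
            rw [hfil, Fin.card_Iio, smul_eq_mul]
        _ = ∑ j ∈ Finset.range K.card, j * bnd p (K.card - j + 1) :=
            Fin.sum_univ_eq_sum_range (fun m => m * bnd p (K.card - m + 1)) K.card
    rw [hcardT] at hcolorable
    have hfinal := hcolorable.mono (keyStep p K.card)
    rw [hKcard] at hfinal
    exact hfinal


end Stmt12

theorem stmt_12 (p : ℕ) (hp : 1 ≤ p) (V : Type) [Fintype V] (G : SimpleGraph V)
    (h1 : IsEmpty (pK2 (p + 2) ↪g G))
    (h2 : IsEmpty ((pK2 p ⊕g diamond) ↪g G)) :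
    G.chromaticNumber ≤
      ((Nat.choose (G.cliqueNum + 2 * p) (2 * p + 1) +
        Nat.choose (G.cliqueNum + 2 * p - 3) (2 * p - 1) : ℕ) : ℕ∞) := by
  have hcol := Stmt12.main p V G h1 h2
  have hbnd : Stmt12.bnd p G.cliqueNum
      = Nat.choose (G.cliqueNum + 2 * p) (2 * p + 1) +
        Nat.choose (G.cliqueNum + 2 * p - 3) (2 * p - 1) := by
    obtain ⟨q, rfl⟩ : ∃ q, p = q + 1 := ⟨p - 1, by omega⟩
    simp only [Stmt12.bnd]
  rw [← hbnd]
  exact hcol.chromaticNumber_le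
end

section
/- For all integers d ≥ 0 and n ≥ 2(d+1), every 𝐁_{n,d}-free graph G satisfies χ(G) ≤ g_{n,d}(ω(G)) (where for a graph with no vertices this holds trivially; for ω(G) ≥ 1 the value g_{n,d}(ω(G)) is given by the recursion). -/
open Finset

open SimpleGraph

/-- The join `K_m + H` construction: disjoint union with all edges in between. -/
def graphJoin {α β : Type*} (G : SimpleGraph α) (H : SimpleGraph β) :
    SimpleGraph (α ⊕ β) where
  Adj x y :=
    match x, y with
    | Sum.inl a, Sum.inl b => G.Adj a b
    | Sum.inr a, Sum.inr b => H.Adj a b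
    | Sum.inl _, Sum.inr _ => True
    | Sum.inr _, Sum.inl _ => True
  symm := ⟨by rintro (a|a) (b|b) h <;> simp_all [SimpleGraph.adj_comm]⟩
  loopless := ⟨by rintro (a|a) h <;> simp_all⟩

/-- `InB n d V H` says that the graph `H` on vertex type `V` belongs (up to
isomorphism) to the family `𝐁_{n,d}`: `𝐁_{n,0}` consists of the graphs on `n`
vertices having a vertex adjacent to all other vertices, and for `d > 0`,
`𝐁_{n,d} = ⋃_{m=2d}^{n−2} { K_{n−m−2} + (K₂ ∪ H') : H' ∈ 𝐁_{m,d−1} }`. -/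
def InB : ℕ → ℕ → (V : Type) → SimpleGraph V → Prop
  | n, 0, V, H => Nat.card V = n ∧ ∃ v : V, ∀ w : V, w ≠ v → H.Adj v w
  | n, d + 1, _, H => ∃ m : ℕ, 2 * (d + 1) ≤ m ∧ m ≤ n - 2 ∧
      ∃ (W : Type) (H' : SimpleGraph W), InB m d W H' ∧
        Nonempty (H ≃g graphJoin (⊤ : SimpleGraph (Fin (n - m - 2)))
          ((⊤ : SimpleGraph (Fin 2)) ⊕g H'))

/-- A graph `G` is `𝐁_{n,d}`-free if no induced subgraph of `G` is isomorphic to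
a member of `𝐁_{n,d}`. -/
def BFree (n d : ℕ) {V : Type} (G : SimpleGraph V) : Prop :=
  ∀ (W : Type) (H : SimpleGraph W), InB n d W H → IsEmpty (H ↪g G)

/-- The bounding function `g_{n,d}` (defined here for all `ω`, with value `1`
for `ω ≤ 1`): `g_{n,d}(1) = 1`, `g_{n,0}(ω) = n − 1` for `ω > 1`, and
`g_{n,d}(ω) = ∑_{k=1}^{ω} (ω−k+1) · g_{max(n+k−ω−2, 2d), d−1}(k)` for
`ω > 1`, `d > 0`. -/
def g : ℕ → ℕ → ℕ → ℕ
  | n, 0, ω => if ω ≤ 1 then 1 else n - 1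
  | n, d + 1, ω =>
    if ω ≤ 1 then 1
    else ∑ k ∈ Finset.Icc 1 ω, (ω - k + 1) * g (max (n + k - ω - 2) (2 * (d + 1))) d k
termination_by n d ω => d

lemma g_one (n d : ℕ) : g n d 1 = 1 := by cases d <;> simp [g]

lemma g_pos (n d ω : ℕ) (hn : 2 ≤ n) : 1 ≤ g n d ω := by
  cases d with
  | zero => rw [g]; split <;> omega
  | succ d =>
    rw [g]; split
    · omega
    · rename_i h
      calc 1 ≤ (ω - 1 + 1) * g (max (n + 1 - ω - 2) (2 * (d+1))) d 1 := by
              rw [g_one]; omega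
        _ ≤ _ := Finset.single_le_sum (f := fun k => (ω - k + 1) * g (max (n + k - ω - 2) (2 * (d+1))) d k)
              (fun i _ => Nat.zero_le _) (by simp; omega)

lemma g_mono (d : ℕ) : ∀ (n : ℕ), 2 ≤ n → ∀ {a b : ℕ}, a ≤ b → g n d a ≤ g n d b := by
  induction d with
  | zero => intro n hn a b hab; rw [g, g]; split <;> split <;> omega
  | succ d ih =>
    have step : ∀ (n ω : ℕ), 2 ≤ n → g n (d+1) ω ≤ g n (d+1) (ω+1) := by
      intro n ω hn
      by_cases hω : ω ≤ 1
      · conv_lhs => rw [g]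
        rw [if_pos hω]; exact g_pos _ _ _ hn
      · conv_lhs => rw [g]
        conv_rhs => rw [g]
        rw [if_neg hω, if_neg (by omega)]
        calc ∑ k ∈ Icc 1 ω, (ω - k + 1) * g (max (n + k - ω - 2) (2 * (d+1))) d k
            ≤ ∑ k ∈ Icc 1 ω, (ω - k + 1) * g (max (n + k - ω - 2) (2 * (d+1))) d (k+1) := by
              refine Finset.sum_le_sum fun k hk => Nat.mul_le_mul_left _ ?_
              exact ih _ (le_trans (by omega) (le_max_right _ _)) (by omega)
          _ = ∑ k ∈ Icc 2 (ω+1), (ω + 1 - k + 1) * g (max (n + k - (ω+1) - 2) (2 * (d+1))) d k := by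
              refine Finset.sum_nbij' (fun k => k + 1) (fun k => k - 1) ?_ ?_ ?_ ?_ ?_ <;>
                intro a ha <;> simp only [Finset.mem_Icc] at *
              · omega
              · omega
              · omega
              · omega
              · have h1 : ω + 1 - (a+1) + 1 = ω - a + 1 := by omega
                have h2 : n + (a+1) - (ω+1) - 2 = n + a - ω - 2 := by omega
                rw [h1, h2]
          _ ≤ ∑ k ∈ Icc 1 (ω+1), (ω + 1 - k + 1) * g (max (n + k - (ω+1) - 2) (2 * (d+1))) d k :=
              Finset.sum_le_sum_of_subset (by intro a; simp only [Finset.mem_Icc]; omega)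
    intro n hn a b hab
    induction b with
    | zero => have : a = 0 := by omega
              subst this; exact le_refl _
    | succ b ihb =>
      rcases Nat.lt_or_ge a (b+1) with h | h
      · exact le_trans (ihb (by omega)) (step n b hn)
      · have : a = b + 1 := by omega
        subst this; rfl

lemma two_le_cliqueNum_of_adj {V : Type} [Fintype V] {G : SimpleGraph V} {x y : V}
    (h : G.Adj x y) : 2 ≤ G.cliqueNum := by
  classical
  have hc : G.IsClique (↑({x, y} : Finset V)) := by
    simp only [Finset.coe_insert, Finset.coe_singleton]
    exact SimpleGraph.isClique_pair.mpr (fun _ => h)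
  have := SimpleGraph.IsClique.card_le_cliqueNum (tc := hc)
  rwa [Finset.card_pair h.ne] at this

lemma colorable_one_of_cliqueNum_le_one {V : Type} [Fintype V] {G : SimpleGraph V}
    (h : G.cliqueNum ≤ 1) : G.Colorable 1 := by
  refine ⟨⟨fun _ => 0, fun {x y} hadj => absurd (two_le_cliqueNum_of_adj hadj) (by omega)⟩⟩

lemma greedy_colorable {D : ℕ} : ∀ (N : ℕ) (V : Type) [Fintype V] (G : SimpleGraph V),
    Fintype.card V ≤ N → (∀ v : V, (G.neighborSet v).ncard ≤ D) → G.Colorable (D + 1) := by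
  intro N
  induction N with
  | zero =>
    intro V _ G hcard _
    have : IsEmpty V := by
      rw [← Fintype.card_eq_zero_iff]; omega
    exact SimpleGraph.Colorable.of_isEmpty (G := G) _
  | succ N ih =>
    intro V _ G hcard hdeg
    classical
    rcases isEmpty_or_nonempty V with hV | hV
    · exact SimpleGraph.Colorable.of_isEmpty (G := G) _
    obtain ⟨v⟩ := hV
    set s : Set V := {v}ᶜ with hs
    have hcard' : Fintype.card s ≤ N := by
      have h1 : Fintype.card s = Fintype.card V - Fintype.card ({v} : Set V) :=
        Fintype.card_compl_set _
      have h2 : Fintype.card ({v} : Set V) = 1 := Set.card_singleton v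
      have h3 : 1 ≤ Fintype.card V := Fintype.card_pos_iff.mpr ⟨v⟩
      omega
    have hdeg' : ∀ w : s, ((G.induce s).neighborSet w).ncard ≤ D := by
      intro w
      refine le_trans ?_ (hdeg ↑w)
      have himg : (Subtype.val '' ((G.induce s).neighborSet w)) ⊆ G.neighborSet ↑w := by
        rintro _ ⟨u, hu, rfl⟩
        exact hu
      calc ((G.induce s).neighborSet w).ncard
          = (Subtype.val '' ((G.induce s).neighborSet w)).ncard :=
            (Set.ncard_image_of_injective _ Subtype.val_injective).symm
        _ ≤ (G.neighborSet ↑w).ncard := Set.ncard_le_ncard himg (Set.toFinite _)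
    obtain ⟨C⟩ := ih s (G.induce s) hcard' hdeg'
    -- colors used by neighbors of v
    set t : Finset (Fin (D+1)) :=
      (Finset.univ.filter (fun w : s => G.Adj v ↑w)).image (fun w => C w) with ht
    have htcard : t.card ≤ D := by
      refine le_trans (Finset.card_image_le) (le_trans ?_ (hdeg v))
      rw [show (G.neighborSet v).ncard = (G.neighborSet v).toFinset.card from
        Set.ncard_eq_toFinset_card' _]
      refine Finset.card_le_card_of_injOn Subtype.val ?_ ?_
      · intro w hw
        simp only [Finset.mem_coe, Finset.mem_filter] at hw
        simp [hw.2]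
      · exact Function.Injective.injOn Subtype.val_injective
    have : tᶜ.Nonempty := by
      rw [← Finset.card_pos, Finset.card_compl]
      simp only [Fintype.card_fin]
      omega
    obtain ⟨c0, hc0⟩ := this
    rw [Finset.mem_compl] at hc0
    refine ⟨⟨fun x => if h : x = v then c0 else C ⟨x, h⟩, ?_⟩⟩
    intro x y hadj heq
    by_cases hx : x = v
    · have hy : y ≠ v := fun h => G.loopless.irrefl v (by rwa [hx, h] at hadj)
      rw [dif_pos hx, dif_neg hy] at heq
      refine hc0 (heq ▸ Finset.mem_image_of_mem _ ?_)
      simp only [Finset.mem_filter, Finset.mem_univ, true_and]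
      rw [← hx]; exact hadj
    · by_cases hy : y = v
      · subst hy
        rw [dif_pos rfl, dif_neg hx] at heq
        exact hc0 (heq.symm ▸ Finset.mem_image_of_mem _ (by simp [hadj.symm]))
      · rw [dif_neg hx, dif_neg hy] at heq
        exact C.valid (by exact hadj : (G.induce s).Adj ⟨x, hx⟩ ⟨y, hy⟩) heq

lemma deg_le_of_BFree0 {n : ℕ} (hn : 2 ≤ n) {V : Type} [Fintype V] {G : SimpleGraph V}
    (hG : BFree n 0 G) (v : V) : (G.neighborSet v).ncard ≤ n - 2 := by
  classical
  by_contra hlt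
  push_neg at hlt
  have hge : n - 1 ≤ (G.neighborSet v).toFinset.card := by
    rw [← Set.ncard_eq_toFinset_card']; omega
  obtain ⟨t, hts, htc⟩ := Finset.exists_subset_card_eq hge
  have hvt : v ∉ t := fun hv => by
    have := hts hv; rw [Set.mem_toFinset] at this; exact G.loopless.irrefl v this
  set s0 : Finset V := insert v t with hs0
  have hcard : s0.card = n := by
    rw [Finset.card_insert_of_notMem hvt, htc]; omega
  have hmemv : v ∈ (↑s0 : Set V) := by simp [hs0]
  have hinb : InB n 0 ↥(↑s0 : Set V) (G.induce ↑s0) := by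
    constructor
    · rw [Nat.card_eq_fintype_card]
      rw [show Fintype.card ↥(↑s0 : Set V) = s0.card from by simp]
      exact hcard
    · refine ⟨⟨v, hmemv⟩, ?_⟩
      rintro ⟨w, hw⟩ hne
      have hwv : w ≠ v := fun h => hne (Subtype.ext h)
      have hwt : w ∈ t := by
        rcases Finset.mem_insert.mp (by exact_mod_cast hw) with h | h
        · exact absurd h hwv
        · exact h
      have := hts hwt
      rw [Set.mem_toFinset] at this
      exact this
  exact (hG _ _ hinb).false (SimpleGraph.Embedding.induce _)


lemma base_case {n : ℕ} (hn : 2 ≤ n) {V : Type} [Fintype V] {G : SimpleGraph V}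
    (hG : BFree n 0 G) : G.Colorable (g n 0 G.cliqueNum) := by
  by_cases hω : G.cliqueNum ≤ 1
  · rw [g, if_pos hω]
    exact colorable_one_of_cliqueNum_le_one hω
  · rw [g, if_neg hω]
    have := greedy_colorable (D := n - 2) (Fintype.card V) V G le_rfl (deg_le_of_BFree0 hn hG)
    have heq : n - 2 + 1 = n - 1 := by omega
    rwa [heq] at this

lemma colorable_of_partition {V : Type} [Fintype V] (G : SimpleGraph V)
    {ι : Type} [Fintype ι] (cls : ι → Set V) (c : ι → ℕ) (idx : V → ι)
    (hmem : ∀ x, x ∈ cls (idx x))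
    (hcol : ∀ i, (G.induce (cls i)).Colorable (c i)) :
    G.Colorable (∑ i, c i) := by
  classical
  have C : ∀ i, (G.induce (cls i)).Coloring (Fin (c i)) := fun i => (hcol i).some
  have hcolor : G.Coloring (Σ i, Fin (c i)) := by
    refine ⟨fun x => ⟨idx x, C (idx x) ⟨x, hmem x⟩⟩, ?_⟩
    intro x y hadj heq
    have h1 : idx x = idx y := congrArg Sigma.fst heq
    have key : ∀ (p q : ι) (hx : x ∈ cls p) (hy : y ∈ cls q), p = q →
        (⟨p, C p ⟨x, hx⟩⟩ : Σ i, Fin (c i)) = ⟨q, C q ⟨y, hy⟩⟩ → False := by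
      rintro p q hx hy rfl hs
      have h2 : C p ⟨x, hx⟩ = C p ⟨y, hy⟩ := eq_of_heq (Sigma.mk.inj_iff.mp hs).2
      exact (C p).valid (by exact hadj : (G.induce (cls p)).Adj ⟨x, hx⟩ ⟨y, hy⟩) h2
    exact key (idx x) (idx y) (hmem x) (hmem y) h1 heq
  have := hcolor.colorable
  rwa [Fintype.card_sigma, (by simp : ∑ i, Fintype.card (Fin (c i)) = ∑ i, c i)] at this

lemma sum_pairs (ω : ℕ) (F : ℕ → ℕ) :
    ∑ p : Fin ω × Fin ω, (if (p.1 : ℕ) ≤ (p.2 : ℕ) then F ((p.2 : ℕ) - (p.1 : ℕ) + 1) else 0)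
      = ∑ k ∈ Finset.Icc 1 ω, (ω - k + 1) * F k := by
  classical
  rw [Fintype.sum_prod_type]
  have h1 : ∀ i : Fin ω, ∑ j : Fin ω, (if (i : ℕ) ≤ (j : ℕ) then F ((j : ℕ) - (i : ℕ) + 1) else 0)
      = ∑ j ∈ Finset.range ω, (if (i : ℕ) ≤ j then F (j - (i : ℕ) + 1) else 0) := by
    intro i
    rw [← Fin.sum_univ_eq_sum_range (fun j => if (i : ℕ) ≤ j then F (j - (i : ℕ) + 1) else 0) ω]
  calc ∑ i : Fin ω, ∑ j : Fin ω, (if (i : ℕ) ≤ (j : ℕ) then F ((j : ℕ) - (i : ℕ) + 1) else 0)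
      = ∑ i ∈ Finset.range ω, ∑ j ∈ Finset.range ω, (if i ≤ j then F (j - i + 1) else 0) := by
        rw [← Fin.sum_univ_eq_sum_range
          (fun i => ∑ j ∈ Finset.range ω, (if i ≤ j then F (j - i + 1) else 0)) ω]
        exact Finset.sum_congr rfl (fun i _ => h1 i)
    _ = ∑ p ∈ (Finset.range ω ×ˢ Finset.range ω).filter (fun p => p.1 ≤ p.2),
          F (p.2 - p.1 + 1) := by
        rw [Finset.sum_filter, Finset.sum_product]
    _ = ∑ x ∈ (Finset.Icc 1 ω).sigma (fun k => Finset.range (ω - k + 1)), F x.1 := by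
        refine Finset.sum_nbij' (fun p => ⟨p.2 - p.1 + 1, p.1⟩) (fun x => (x.2, x.2 + x.1 - 1))
          ?_ ?_ ?_ ?_ ?_
        · rintro ⟨i, j⟩ hp
          simp only [Finset.mem_filter, Finset.mem_product, Finset.mem_range,
            Finset.mem_sigma, Finset.mem_Icc] at *
          omega
        · rintro ⟨k, r⟩ hx
          simp only [Finset.mem_filter, Finset.mem_product, Finset.mem_range,
            Finset.mem_sigma, Finset.mem_Icc] at *
          omega
        · rintro ⟨i, j⟩ hp
          simp only [Finset.mem_filter, Finset.mem_product, Finset.mem_range] at hp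
          simp only [Prod.mk.injEq]
          exact ⟨trivial, by omega⟩
        · rintro ⟨k, r⟩ hx
          simp only [Finset.mem_sigma, Finset.mem_Icc, Finset.mem_range] at hx
          simp only [Sigma.mk.inj_iff, heq_eq_eq]
          exact ⟨by omega, trivial⟩
        · rintro ⟨i, j⟩ hp
          rfl
    _ = ∑ k ∈ Finset.Icc 1 ω, (ω - k + 1) * F k := by
        rw [Finset.sum_sigma]
        refine Finset.sum_congr rfl (fun k _ => ?_)
        dsimp only
        rw [Finset.sum_const, Finset.card_range, smul_eq_mul]

lemma main_aux (d : ℕ) : ∀ (n : ℕ), 2 * (d + 1) ≤ n → ∀ (V : Type) [Fintype V]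
    (G : SimpleGraph V), BFree n d G → G.Colorable (g n d G.cliqueNum) := by
  induction d with
  | zero =>
    intro n hn V _ G hG
    exact base_case (by omega) hG
  | succ d ih =>
    intro n hn V _ G hG
    classical
    by_cases hω1 : G.cliqueNum ≤ 1
    · rw [g, if_pos hω1]
      exact colorable_one_of_cliqueNum_le_one hω1
    set ω := G.cliqueNum with hωdef
    have hω2 : 2 ≤ ω := by omega
    obtain ⟨s, hs⟩ := G.exists_isNClique_cliqueNum
    have hcard : s.card = ω := hs.card_eq
    have e : ↥s ≃ Fin ω := Fintype.equivFinOfCardEq (by rw [Fintype.card_coe]; exact hcard)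
    set v : Fin ω → V := fun t => ↑(e.symm t) with hv
    have hvinj : Function.Injective v := fun a b hab => by
      have := Subtype.ext hab (p := fun x => x ∈ s)
      exact e.symm.injective this
    have hvmem : ∀ t, v t ∈ s := fun t => (e.symm t).2
    have hvadj : ∀ {a b : Fin ω}, a ≠ b → G.Adj (v a) (v b) := by
      intro a b hab
      exact hs.isClique (Finset.mem_coe.mpr (hvmem a)) (Finset.mem_coe.mpr (hvmem b))
        (fun h => hab (hvinj h))
    have hveq : ∀ x (hx : x ∈ s), v (e ⟨x, hx⟩) = x := by
      intro x hx; simp [hv]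
    have hnoclique : ∀ (t : Finset V), G.IsClique ↑t → t.card ≤ ω := by
      intro t ht; exact ht.card_le_cliqueNum
    -- non-neighbour sets
    set nn : V → Finset (Fin ω) := fun x => Finset.univ.filter (fun t => ¬ G.Adj x (v t))
      with hnndef
    have hnn : ∀ x : V, (nn x).Nonempty := by
      intro x
      by_cases hx : x ∈ s
      · refine ⟨e ⟨x, hx⟩, ?_⟩
        simp only [hnndef, Finset.mem_filter, Finset.mem_univ, true_and]
        rw [hveq x hx]
        exact G.loopless.irrefl x
      · by_contra hne
        rw [Finset.nonempty_iff_ne_empty, not_not] at hne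
        have hadjall : ∀ y ∈ s, G.Adj x y := by
          intro y hy
          have ht : e ⟨y, hy⟩ ∉ nn x := by rw [hne]; exact Finset.notMem_empty _
          simp only [hnndef, Finset.mem_filter, Finset.mem_univ, true_and, not_not] at ht
          rwa [hveq y hy] at ht
        have hclq : G.IsClique ↑(insert x s) := by
          rw [Finset.coe_insert]
          exact hs.isClique.insert (fun b hb _ => hadjall b hb)
        have := hnoclique _ hclq
        rw [Finset.card_insert_of_notMem hx, hcard] at this
        omega
    set I : V → Fin ω := fun x => (nn x).min' (hnn x) with hI
    set J : V → Fin ω := fun x => (nn x).max' (hnn x) with hJ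
    have hIJ : ∀ x, I x ≤ J x := fun x => Finset.min'_le _ _ (Finset.max'_mem _ (hnn x))
    have hInadj : ∀ x, ¬ G.Adj x (v (I x)) := by
      intro x
      have := Finset.min'_mem _ (hnn x)
      simp only [hnndef, Finset.mem_filter] at this
      exact this.2
    have hJnadj : ∀ x, ¬ G.Adj x (v (J x)) := by
      intro x
      have := Finset.max'_mem _ (hnn x)
      simp only [hnndef, Finset.mem_filter] at this
      exact this.2
    have hadjlow : ∀ x (t : Fin ω), t < I x → G.Adj x (v t) := by
      intro x t ht
      by_contra h
      exact absurd (Finset.min'_le _ t (by simp [hnndef, h])) (not_le.mpr ht)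
    have hadjhigh : ∀ x (t : Fin ω), J x < t → G.Adj x (v t) := by
      intro x t ht
      by_contra h
      exact absurd (Finset.le_max' _ t (by simp [hnndef, h])) (not_le.mpr ht)
    have hadjout : ∀ x (t : Fin ω), (t < I x ∨ J x < t) → G.Adj x (v t) := by
      rintro x t (h | h)
      · exact hadjlow x t h
      · exact hadjhigh x t h
    have hIv : ∀ t : Fin ω, I (v t) = t ∧ J (v t) = t := by
      intro t
      have hnnv : nn (v t) = {t} := by
        ext u
        simp only [hnndef, Finset.mem_filter, Finset.mem_univ, true_and, Finset.mem_singleton]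
        constructor
        · intro h
          by_contra hu
          exact h (hvadj (fun h' => hu h'.symm))
        · rintro rfl
          exact G.loopless.irrefl (v u)
      constructor
      · simp [hI, hnnv]
      · simp [hJ, hnnv]
    -- classes
    set cls : Fin ω × Fin ω → Set V := fun p => {x | I x = p.1 ∧ J x = p.2} with hcls
    have hxnev : ∀ (i j : Fin ω) x, x ∈ cls (i, j) → i ≠ j → ∀ t, x ≠ v t := by
      rintro i j x hx hij t rfl
      obtain ⟨h1, h2⟩ := hIv t
      have h3 : I (v t) = i := hx.1
      have h4 : J (v t) = j := hx.2
      exact hij (by rw [← h3, ← h4, h1, h2])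
    -- clique bound for classes
    have clique_bound : ∀ i j : Fin ω, i ≤ j →
        (G.induce (cls (i, j))).cliqueNum ≤ (j : ℕ) - (i : ℕ) + 1 := by
      intro i j hij
      obtain ⟨s', hs'⟩ := (G.induce (cls (i, j))).exists_isNClique_cliqueNum
      set A : Finset V := s'.image Subtype.val with hA
      set B : Finset V := ((Finset.Icc i j)ᶜ).image v with hB
      have hAcard : A.card = (G.induce (cls (i, j))).cliqueNum := by
        rw [hA, Finset.card_image_of_injective _ Subtype.val_injective, hs'.card_eq]
      have hBcard : B.card = ω - ((j : ℕ) + 1 - (i : ℕ)) := by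
        rw [hB, Finset.card_image_of_injective _ hvinj, Finset.card_compl, Fin.card_Icc,
          Fintype.card_fin]
      have hmemA : ∀ x ∈ A, x ∈ cls (i, j) := by
        intro x hx
        obtain ⟨a, _, rfl⟩ := Finset.mem_image.mp hx
        exact a.2
      have houtB : ∀ t : Fin ω, t ∈ (Finset.Icc i j)ᶜ → t < i ∨ j < t := by
        intro t ht
        rw [Finset.mem_compl, Finset.mem_Icc, not_and_or, not_le, not_le] at ht
        exact ht
      have hclsadj : ∀ x ∈ cls (i, j), ∀ t : Fin ω, (t < i ∨ j < t) → G.Adj x (v t) := by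
        intro x hx t ht
        obtain ⟨h1, h2⟩ := hx
        apply hadjout
        rw [h1, h2]
        exact ht
      have hdisj : Disjoint A B := by
        rw [Finset.disjoint_left]
        intro x hxA hxB
        obtain ⟨t, ht, rfl⟩ := Finset.mem_image.mp hxB
        obtain ⟨h1, h2⟩ := hmemA _ hxA
        obtain ⟨h3, h4⟩ := hIv t
        rcases houtB t ht with h | h
        · rw [h1] at h3; exact absurd (h3 ▸ h) (lt_irrefl _)
        · rw [h2] at h4; exact absurd (h4 ▸ h) (lt_irrefl _)
      have hclique : G.IsClique ↑(A ∪ B) := by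
        rw [Finset.coe_union]
        intro a ha b hb hne
        have hcross : ∀ x y, x ∈ A → y ∈ B → G.Adj x y := by
          intro x y hx hy
          obtain ⟨t, ht, rfl⟩ := Finset.mem_image.mp hy
          exact hclsadj x (hmemA x hx) t (houtB t ht)
        rcases ha with ha | ha <;> rcases hb with hb | hb
        · obtain ⟨a', ha', rfl⟩ := Finset.mem_image.mp ha
          obtain ⟨b', hb', rfl⟩ := Finset.mem_image.mp hb
          have : a' ≠ b' := fun h => hne (congrArg Subtype.val h)
          exact hs'.isClique (Finset.mem_coe.mpr ha') (Finset.mem_coe.mpr hb') this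
        · exact hcross a b ha hb
        · exact (hcross b a hb ha).symm
        · obtain ⟨t, _, rfl⟩ := Finset.mem_image.mp ha
          obtain ⟨u, _, rfl⟩ := Finset.mem_image.mp hb
          exact hvadj (fun h => hne (congrArg v h))
      have hfinal := hnoclique (A ∪ B) hclique
      rw [Finset.card_union_of_disjoint hdisj, hAcard, hBcard] at hfinal
      have hjw : (j : ℕ) < ω := j.2
      have hijn : (i : ℕ) ≤ (j : ℕ) := hij
      omega
    -- B-freeness for classes with i < j
    have bfree_cls : ∀ i j : Fin ω, i < j →
        BFree (max (n + ((j : ℕ) - (i : ℕ) + 1) - ω - 2) (2 * (d + 1))) d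
          (G.induce (cls (i, j))) := by
      intro i j hij W H' hInB'
      constructor
      intro f'
      set k : ℕ := (j : ℕ) - (i : ℕ) + 1 with hk
      set m : ℕ := max (n + k - ω - 2) (2 * (d + 1)) with hm
      have hijn : (i : ℕ) < (j : ℕ) := hij
      have hjw : (j : ℕ) < ω := j.2
      have hm2 : 2 * (d + 1) ≤ m := le_max_right _ _
      have hmn2 : m ≤ n - 2 := by
        apply max_le <;> omega
      have hmlow : n + k - ω - 2 ≤ m := le_max_left _ _
      have houtcard : n - m - 2 ≤ ((Finset.Icc i j)ᶜ).card := by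
        rw [Finset.card_compl, Fin.card_Icc, Fintype.card_fin]
        omega
      obtain ⟨Q, hQsub, hQcard⟩ := Finset.exists_subset_card_eq houtcard
      have eQ : ↥Q ≃ Fin (n - m - 2) :=
        Fintype.equivFinOfCardEq (by rw [Fintype.card_coe]; exact hQcard)
      set q : Fin (n - m - 2) → Fin ω := fun a => ↑(eQ.symm a) with hq
      have hqinj : Function.Injective q := fun a b hab => by
        have := Subtype.ext hab (p := fun x => x ∈ Q)
        exact eQ.symm.injective this
      have hqout : ∀ a, q a < i ∨ j < q a := by
        intro a
        have : (q a) ∈ (Finset.Icc i j)ᶜ := hQsub (eQ.symm a).2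
        rw [Finset.mem_compl, Finset.mem_Icc, not_and_or, not_le, not_le] at this
        exact this
      -- class member facts
      have hfmem : ∀ w : W, ((f' w : ↥(cls (i, j))) : V) ∈ cls (i, j) := fun w => (f' w).2
      have hfI : ∀ w : W, I ((f' w : ↥(cls (i, j))) : V) = i := fun w => (hfmem w).1
      have hfJ : ∀ w : W, J ((f' w : ↥(cls (i, j))) : V) = j := fun w => (hfmem w).2
      have hfadji : ∀ w : W, ¬ G.Adj ((f' w : ↥(cls (i, j))) : V) (v i) := by
        intro w
        have := hInadj ((f' w : ↥(cls (i, j))) : V)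
        rwa [hfI w] at this
      have hfadjj : ∀ w : W, ¬ G.Adj ((f' w : ↥(cls (i, j))) : V) (v j) := by
        intro w
        have := hJnadj ((f' w : ↥(cls (i, j))) : V)
        rwa [hfJ w] at this
      have hfadjout : ∀ (w : W) (t : Fin ω), (t < i ∨ j < t) →
          G.Adj ((f' w : ↥(cls (i, j))) : V) (v t) := by
        intro w t ht
        apply hadjout
        rw [hfI w, hfJ w]
        exact ht
      have hfnev : ∀ (w : W) (t : Fin ω), ((f' w : ↥(cls (i, j))) : V) ≠ v t :=
        fun w t => hxnev i j _ (hfmem w) (Fin.ne_of_lt hij) t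
      -- the map
      set w2 : Fin 2 → V := fun t => if t = 0 then v i else v j with hw2
      set φ : (Fin (n - m - 2) ⊕ (Fin 2 ⊕ W)) → V :=
        Sum.elim (fun a => v (q a)) (Sum.elim w2 (fun w => ((f' w : ↥(cls (i, j))) : V)))
        with hφ
      have two : ∀ t : Fin 2, t = 0 ∨ t = 1 := by decide
      have hw20 : w2 0 = v i := if_pos rfl
      have hw21 : w2 1 = v j := if_neg (by decide)
      have hvij : v i ≠ v j := fun h => (Fin.ne_of_lt hij) (hvinj h)
      have hw2ne : ∀ t t' : Fin 2, t ≠ t' → w2 t ≠ w2 t' := by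
        intro t t' htt'
        rcases two t with rfl | rfl <;> rcases two t' with rfl | rfl <;>
          first
          | exact absurd rfl htt'
          | (rw [hw20, hw21]; exact hvij)
          | (rw [hw20, hw21]; exact hvij.symm)
      have hw2adj : ∀ t t' : Fin 2, t ≠ t' → G.Adj (w2 t) (w2 t') := by
        intro t t' htt'
        rcases two t with rfl | rfl <;> rcases two t' with rfl | rfl <;>
          first
          | exact absurd rfl htt'
          | (rw [hw20, hw21]; exact hvadj (Fin.ne_of_lt hij))
          | (rw [hw20, hw21]; exact (hvadj (Fin.ne_of_lt hij)).symm)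
      have hw2idx : ∀ t : Fin 2, ∃ u : Fin ω, (u = i ∨ u = j) ∧ w2 t = v u := by
        intro t
        rcases two t with rfl | rfl
        · exact ⟨i, Or.inl rfl, hw20.symm ▸ rfl⟩
        · exact ⟨j, Or.inr rfl, hw21.symm ▸ rfl⟩
      have hqne2 : ∀ (a : Fin (n - m - 2)) (t : Fin 2), v (q a) ≠ w2 t := by
        intro a t heq
        obtain ⟨u, hu, hequ⟩ := hw2idx t
        rw [hequ] at heq
        have := hvinj heq
        rcases hqout a with h | h <;> rcases hu with rfl | rfl
        · exact absurd (this ▸ h) (lt_irrefl _)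
        · exact absurd h (by rw [this]; exact fun hc => (lt_irrefl _ (hc.trans hij))) 
        · exact absurd h (by rw [this]; exact fun hc => (lt_irrefl _ (hij.trans hc)))
        · exact absurd (this ▸ h) (lt_irrefl _)
      have hqadjf : ∀ (a : Fin (n - m - 2)) (w : W),
          G.Adj (v (q a)) ((f' w : ↥(cls (i, j))) : V) :=
        fun a w => (hfadjout w (q a) (hqout a)).symm
      have hw2nadjf : ∀ (t : Fin 2) (w : W),
          ¬ G.Adj (w2 t) ((f' w : ↥(cls (i, j))) : V) := by
        intro t w h
        rcases two t with rfl | rfl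
        · rw [hw20] at h; exact hfadji w h.symm
        · rw [hw21] at h; exact hfadjj w h.symm
      have hw2adjq : ∀ (t : Fin 2) (a : Fin (n - m - 2)), G.Adj (w2 t) (v (q a)) := by
        intro t a
        obtain ⟨u, hu, hequ⟩ := hw2idx t
        rw [hequ]
        apply hvadj
        rcases hqout a with h | h <;> rcases hu with rfl | rfl
        · exact fun hc => absurd (hc ▸ h) (lt_irrefl _)
        · exact fun hc => absurd (hc ▸ h) (fun h2 => lt_irrefl _ (h2.trans hij))
        · exact fun hc => absurd (hc ▸ h) (fun h2 => lt_irrefl _ (hij.trans h2))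
        · exact fun hc => absurd (hc ▸ h) (lt_irrefl _)
      have hφinj : Function.Injective φ := by
        rintro (a | t | w) (b | t' | w') heq <;> simp only [hφ, Sum.elim_inl, Sum.elim_inr] at heq
        · rw [hqinj (hvinj heq)]
        · exact absurd heq (hqne2 a t')
        · exact absurd heq.symm (hfnev w' (q a))
        · exact absurd heq.symm (hqne2 b t)
        · by_cases h : t = t'
          · rw [h]
          · exact absurd heq (hw2ne t t' h)
        · obtain ⟨u, _, hequ⟩ := hw2idx t
          rw [hequ] at heq
          exact absurd heq.symm (hfnev w' u)
        · exact absurd heq (hfnev w (q b))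
        · obtain ⟨u, _, hequ⟩ := hw2idx t'
          rw [hequ] at heq
          exact absurd heq (hfnev w u)
        · rw [f'.injective (Subtype.ext heq)]
      have hφrel : ∀ {a b}, G.Adj (φ a) (φ b) ↔
          (graphJoin (⊤ : SimpleGraph (Fin (n - m - 2)))
            ((⊤ : SimpleGraph (Fin 2)) ⊕g H')).Adj a b := by
        rintro (a | t | w) (b | t' | w')
        · show G.Adj (v (q a)) (v (q b)) ↔ a ≠ b
          constructor
          · intro h hab; rw [hab] at h; exact G.loopless.irrefl _ h
          · intro hab; exact hvadj (fun h => hab (hqinj h))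
        · show G.Adj (v (q a)) (w2 t') ↔ True
          simp only [iff_true]
          exact (hw2adjq t' a).symm
        · show G.Adj (v (q a)) _ ↔ True
          simp only [iff_true]
          exact hqadjf a w'
        · show G.Adj (w2 t) (v (q b)) ↔ True
          simp only [iff_true]
          exact hw2adjq t b
        · show G.Adj (w2 t) (w2 t') ↔ t ≠ t'
          constructor
          · intro h htt'; rw [htt'] at h; exact G.loopless.irrefl _ h
          · exact hw2adj t t'
        · constructor
          · intro h
            exact absurd h (hw2nadjf t w')
          · intro h
            exact Bool.noConfusion h
        · show G.Adj ((f' w : ↥(cls (i, j))) : V) (v (q b)) ↔ True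
          simp only [iff_true]
          exact (hqadjf b w).symm
        · constructor
          · intro h
            exact absurd h.symm (hw2nadjf t' w)
          · intro h
            exact Bool.noConfusion h
        · show G.Adj _ _ ↔ H'.Adj w w'
          rw [← f'.map_rel_iff']
          exact Iff.rfl
      have hemb : (graphJoin (⊤ : SimpleGraph (Fin (n - m - 2)))
          ((⊤ : SimpleGraph (Fin 2)) ⊕g H')) ↪g G := ⟨⟨φ, hφinj⟩, hφrel⟩
      exact (hG _ _ ⟨m, hm2, hmn2, W, H', hInB',
        ⟨Iso.refl⟩⟩).false hemb
    -- per-class colorability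
    set F : ℕ → ℕ := fun k => g (max (n + k - ω - 2) (2 * (d + 1))) d k with hF
    set c : Fin ω × Fin ω → ℕ :=
      fun p => if (p.1 : ℕ) ≤ (p.2 : ℕ) then F ((p.2 : ℕ) - (p.1 : ℕ) + 1) else 0 with hc
    have hcol : ∀ p : Fin ω × Fin ω, (G.induce (cls p)).Colorable (c p) := by
      rintro ⟨i, j⟩
      by_cases hij : (i : ℕ) ≤ (j : ℕ)
      · have hcp : c (i, j) = F ((j : ℕ) - (i : ℕ) + 1) := if_pos hij
        rw [hcp]
        by_cases hij2 : i = j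
        · subst hij2
          have h1 : (i : ℕ) - (i : ℕ) + 1 = 1 := by omega
          rw [h1]
          show (G.induce (cls (i, i))).Colorable (g (max (n + 1 - ω - 2) (2 * (d + 1))) d 1)
          rw [g_one]
          refine colorable_one_of_cliqueNum_le_one (le_trans (clique_bound i i le_rfl) (by omega))
        · have hlt : i < j := by
            rw [Fin.lt_def]
            exact lt_of_le_of_ne hij (fun h => hij2 (Fin.ext h))
          have hb := bfree_cls i j hlt
          have h2m : 2 ≤ max (n + ((j : ℕ) - (i : ℕ) + 1) - ω - 2) (2 * (d + 1)) :=
            le_trans (by omega) (le_max_right _ _)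
          have hcol' := ih (max (n + ((j : ℕ) - (i : ℕ) + 1) - ω - 2) (2 * (d + 1)))
            (le_max_right _ _) _ (G.induce (cls (i, j))) hb
          refine hcol'.mono ?_
          exact g_mono d _ h2m (clique_bound i j (by rw [Fin.le_def]; exact hij))
      · have hcp : c (i, j) = 0 := if_neg hij
        rw [hcp]
        haveI hie : IsEmpty ↥(cls (i, j)) := by
          refine ⟨fun y => hij ?_⟩
          obtain ⟨x, hx⟩ := y
          have h1 : I x = i := hx.1
          have h2 : J x = j := hx.2
          have h3 := hIJ x
          rw [h1, h2] at h3
          exact h3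
        exact SimpleGraph.Colorable.of_isEmpty (G := G.induce (cls (i, j))) 0
    have hpart := colorable_of_partition G cls c (fun x => (I x, J x))
      (fun x => ⟨rfl, rfl⟩) hcol
    rw [g, if_neg hω1]
    simp only [hc] at hpart
    rwa [sum_pairs ω F] at hpart

theorem stmt_15 (d n : ℕ) (hn : 2 * (d + 1) ≤ n)
    (V : Type) [Fintype V] (G : SimpleGraph V) (hG : BFree n d G) :
    G.chromaticNumber ≤ (g n d G.cliqueNum : ℕ∞) := by
  exact (main_aux d n hn V G hG).chromaticNumber_le
end

section
/- For all integers d ≥ 0, n ≥ 2(d+1) and ω ≥ 1, it holds that g_{n,d}(ω) ≤ C(ω−1+2d, 2d) + C(n−2, 2d+1), and the inequality is strict if and only if (d = 0, ω = 1 and n > 2) or (d > 0 and n > ω+2d+1). Here C(a,b) denotes the binomial coefficient. -/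
lemma hk (r c : ℕ) (h : 0 < r ∨ c = 0) :
    ∀ ω, ∑ i ∈ Finset.range ω, ((i + r) - c).choose r = (ω - c + r).choose (r + 1) := by
  intro ω
  induction ω with
  | zero => simp [Nat.choose_eq_zero_of_lt]
  | succ ω ih =>
    rw [Finset.sum_range_succ, ih]
    rcases le_or_gt c ω with hc | hc
    · have h1 : (ω + r) - c = ω - c + r := by omega
      have h2 : ω + 1 - c + r = (ω - c + r) + 1 := by omega
      rw [h1, h2, Nat.choose_succ_succ, Nat.add_comm]
    · have hr : 0 < r := by rcases h with h | h <;> omega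
      rw [Nat.choose_eq_zero_of_lt (show (ω+r)-c < r by omega)]
      have h1 : ω - c + r = r := by omega
      have h2 : ω + 1 - c + r = r := by omega
      rw [h1, h2]; simp

lemma dh (r c : ℕ) (h : 0 < r ∨ c = 0) :
    ∀ ω, ∑ i ∈ Finset.range ω, (ω - i) * ((i + r) - c).choose r = (ω - c + r + 1).choose (r + 2) := by
  intro ω
  induction ω with
  | zero => simp [Nat.choose_eq_zero_of_lt]
  | succ ω ih =>
    have hsplit : ∑ i ∈ Finset.range (ω+1), (ω + 1 - i) * ((i + r) - c).choose r
        = (∑ i ∈ Finset.range (ω+1), (ω - i) * ((i + r) - c).choose r)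
          + ∑ i ∈ Finset.range (ω+1), ((i + r) - c).choose r := by
      rw [← Finset.sum_add_distrib]
      apply Finset.sum_congr rfl
      intro i hi
      have : i ≤ ω := by simpa [Nat.lt_succ_iff] using hi
      have h1 : ω + 1 - i = (ω - i) + 1 := by omega
      rw [h1]; ring
    rw [hsplit, Finset.sum_range_succ, Nat.sub_self, Nat.zero_mul, Nat.add_zero, ih,
      hk r c h (ω+1)]
    rcases le_or_gt c ω with hc | hc
    · have h1 : ω + 1 - c + r = ω - c + r + 1 := by omega
      rw [h1]
      exact (add_comm _ _).trans (Nat.choose_succ_succ _ _).symm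
    · have hr : 0 < r := by rcases h with h | h <;> omega
      rw [Nat.choose_eq_zero_of_lt (show ω - c + r + 1 < r + 2 by omega),
        Nat.choose_eq_zero_of_lt (show ω + 1 - c + r < r + 1 by omega),
        Nat.choose_eq_zero_of_lt (show ω + 1 - c + r + 1 < r + 2 by omega)]

lemma tailDH (r t : ℕ) :
    ∀ ω, ∑ i ∈ Finset.range ω, (ω - i) * (i + r + t).choose r ≤ (ω + t + r + 1).choose (r + 2) := by
  induction t with
  | zero =>
    intro ω
    have := dh r 0 (Or.inr rfl) ω
    simp only [Nat.sub_zero] at this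
    calc ∑ i ∈ Finset.range ω, (ω - i) * (i + r + 0).choose r
        = (ω + r + 1).choose (r + 2) := by rw [← this]; apply Finset.sum_congr rfl; intro i _; norm_num
      _ ≤ (ω + 0 + r + 1).choose (r + 2) := by norm_num
  | succ t ih =>
    intro ω
    have key : ∑ i ∈ Finset.range ω, (ω - i) * (i + r + (t+1)).choose r
        ≤ ∑ i ∈ Finset.range (ω+1), (ω + 1 - i) * (i + r + t).choose r := by
      rw [Finset.sum_range_succ' (fun i => (ω + 1 - i) * (i + r + t).choose r) ω]
      have : ∑ i ∈ Finset.range ω, (ω + 1 - (i+1)) * ((i+1) + r + t).choose r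
          = ∑ i ∈ Finset.range ω, (ω - i) * (i + r + (t+1)).choose r := by
        apply Finset.sum_congr rfl; intro i _
        have h1 : ω + 1 - (i+1) = ω - i := by omega
        have h2 : i+1 + r + t = i + r + (t+1) := by omega
        rw [h1, h2]
      rw [this]; omega
    calc _ ≤ _ := key
      _ ≤ (ω + 1 + t + r + 1).choose (r+2) := ih (ω+1)
      _ = (ω + (t+1) + r + 1).choose (r+2) := by ring_nf


lemma main_lemma : ∀ d n ω, 2 * (d + 1) ≤ n → 1 ≤ ω →
    g n d ω ≤ Nat.choose (ω - 1 + 2 * d) (2 * d) + Nat.choose (n - 2) (2 * d + 1) ∧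
    (g n d ω < Nat.choose (ω - 1 + 2 * d) (2 * d) + Nat.choose (n - 2) (2 * d + 1) ↔
      (d = 0 ∧ ω = 1 ∧ 2 < n) ∨ (0 < d ∧ ω + 2 * d + 1 < n)) := by
  intro d
  induction d with
  | zero =>
    intro n ω hn hω
    have hg : g n 0 ω = if ω ≤ 1 then 1 else n - 1 := by simp [g]
    simp only [Nat.mul_zero, Nat.add_zero, Nat.choose_zero_right, Nat.zero_add,
      Nat.choose_one_right, true_and, false_and, or_false, eq_self_iff_true]
    by_cases h1 : ω ≤ 1
    · rw [if_pos h1] at hg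
      rw [hg]; omega
    · rw [if_neg h1] at hg
      rw [hg]; omega
  | succ e IH =>
    intro n ω hn hω
    by_cases h1 : ω ≤ 1
    · have hω1 : ω = 1 := by omega
      have hg : g n (e+1) ω = 1 := by rw [g, if_pos h1]
      subst hω1
      have hc1 : (1 - 1 + 2 * (e+1)).choose (2*(e+1)) = 1 := by simp
      rw [hg, hc1]
      have hiff : (n-2).choose (2*(e+1)+1) = 0 ↔ n - 2 < 2*(e+1)+1 := Nat.choose_eq_zero_iff
      constructor
      · omega
      · omega
    · -- ω ≥ 2
      have hω2 : 2 ≤ ω := by omega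
      have hg : g n (e+1) ω
          = ∑ i ∈ Finset.range ω, (ω - i) * g (max (n + (1 + i) - ω - 2) (2 * (e + 1))) e (1 + i) := by
        rw [g, if_neg h1, ← Finset.Ico_add_one_right_eq_Icc, Finset.sum_Ico_eq_sum_range]
        apply Finset.sum_congr (by norm_num)
        intro i hi
        have hi' : i < ω := Finset.mem_range.mp hi
        have h2 : ω - (1 + i) + 1 = ω - i := by omega
        rw [h2]
      have hIH := fun i => IH (max (n + (1 + i) - ω - 2) (2 * (e + 1))) (1 + i)
        (le_max_right _ _) (Nat.le_add_right 1 i)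
      have hA : ∑ i ∈ Finset.range ω, (ω - i) * ((1 + i) - 1 + 2*e).choose (2*e)
          = (ω - 1 + 2*(e+1)).choose (2*(e+1)) := by
        have h0 := dh (2*e) 0 (Or.inr rfl) ω
        calc ∑ i ∈ Finset.range ω, (ω - i) * ((1 + i) - 1 + 2*e).choose (2*e)
            = ∑ i ∈ Finset.range ω, (ω - i) * ((i + 2*e) - 0).choose (2*e) := by
              apply Finset.sum_congr rfl; intro i _
              have h2 : (1 + i) - 1 + 2*e = (i + 2*e) - 0 := by omega
              rw [h2]
          _ = (ω - 0 + 2*e + 1).choose (2*e + 2) := h0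
          _ = (ω - 1 + 2*(e+1)).choose (2*(e+1)) := by congr 1 <;> omega
      by_cases hcase : n ≤ ω + 2*e + 3
      · -- equality regime
        have heq : ∀ i ∈ Finset.range ω, (ω - i) * g (max (n + (1 + i) - ω - 2) (2 * (e + 1))) e (1 + i)
            = (ω - i) * (((1 + i) - 1 + 2*e).choose (2*e)
                + ((max (n + (1 + i) - ω - 2) (2 * (e + 1))) - 2).choose (2*e + 1)) := by
          intro i hi
          have hi' : i < ω := Finset.mem_range.mp hi
          have hle := (hIH i).1
          have hnot : ¬ g (max (n + (1 + i) - ω - 2) (2 * (e + 1))) e (1 + i)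
              < ((1 + i) - 1 + 2*e).choose (2*e)
                + ((max (n + (1 + i) - ω - 2) (2 * (e + 1))) - 2).choose (2*e + 1) := by
            rw [(hIH i).2]
            omega
          congr 1
          omega
        have hsum2 : ∑ i ∈ Finset.range ω,
            (ω - i) * ((max (n + (1 + i) - ω - 2) (2 * (e + 1))) - 2).choose (2*e + 1)
            = (n - 2).choose (2*(e+1) + 1) := by
          have h0 := dh (2*e + 1) (ω + 2*e + 4 - n) (Or.inl (by omega)) ω
          calc ∑ i ∈ Finset.range ω,
              (ω - i) * ((max (n + (1 + i) - ω - 2) (2 * (e + 1))) - 2).choose (2*e + 1)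
              = ∑ i ∈ Finset.range ω, (ω - i) * ((i + (2*e+1)) - (ω + 2*e + 4 - n)).choose (2*e + 1) := by
                apply Finset.sum_congr rfl; intro i hi
                have hi' : i < ω := Finset.mem_range.mp hi
                rcases le_or_gt (ω + 2*e + 4 - n) (i + 1) with hc | hc
                · have h2 : (max (n + (1 + i) - ω - 2) (2 * (e + 1))) - 2
                      = (i + (2*e+1)) - (ω + 2*e + 4 - n) := by omega
                  rw [h2]
                · rw [Nat.choose_eq_zero_of_lt (show (max (n + (1 + i) - ω - 2) (2 * (e + 1))) - 2 < 2*e+1 by omega),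
                    Nat.choose_eq_zero_of_lt (show (i + (2*e+1)) - (ω + 2*e + 4 - n) < 2*e+1 by omega)]
            _ = (ω - (ω + 2*e + 4 - n) + (2*e+1) + 1).choose (2*e + 1 + 2) := h0
            _ = (n - 2).choose (2*(e+1) + 1) := by congr 1 <;> omega
        have hdist : ∑ i ∈ Finset.range ω, (ω - i) * (((1 + i) - 1 + 2*e).choose (2*e)
              + ((max (n + (1 + i) - ω - 2) (2 * (e + 1))) - 2).choose (2*e + 1))
            = (∑ i ∈ Finset.range ω, (ω - i) * ((1 + i) - 1 + 2*e).choose (2*e))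
              + ∑ i ∈ Finset.range ω, (ω - i) * ((max (n + (1 + i) - ω - 2) (2 * (e + 1))) - 2).choose (2*e + 1) := by
          rw [← Finset.sum_add_distrib]
          exact Finset.sum_congr rfl fun i _ => Nat.mul_add _ _ _
        rw [hg, Finset.sum_congr rfl heq, hdist, hA, hsum2]
        omega
      · -- strict regime : n ≥ ω + 2e + 4
        have hstrict := (hIH 0).2.mpr (by omega)
        have hlt : g n (e+1) ω < ∑ i ∈ Finset.range ω,
            (ω - i) * (((1 + i) - 1 + 2*e).choose (2*e)
              + ((max (n + (1 + i) - ω - 2) (2 * (e + 1))) - 2).choose (2*e + 1)) := by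
          rw [hg]
          apply Finset.sum_lt_sum
          · intro i _
            exact Nat.mul_le_mul_left _ (hIH i).1
          · refine ⟨0, Finset.mem_range.mpr (by omega), ?_⟩
            exact (mul_lt_mul_iff_right₀ (show 0 < ω - 0 by omega)).mpr hstrict
        have hbound : ∑ i ∈ Finset.range ω,
            (ω - i) * (((1 + i) - 1 + 2*e).choose (2*e)
              + ((max (n + (1 + i) - ω - 2) (2 * (e + 1))) - 2).choose (2*e + 1))
            ≤ (ω - 1 + 2*(e+1)).choose (2*(e+1)) + (n - 2).choose (2*(e+1) + 1) := by
          have hdist : ∑ i ∈ Finset.range ω, (ω - i) * (((1 + i) - 1 + 2*e).choose (2*e)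
                + ((max (n + (1 + i) - ω - 2) (2 * (e + 1))) - 2).choose (2*e + 1))
              = (∑ i ∈ Finset.range ω, (ω - i) * ((1 + i) - 1 + 2*e).choose (2*e))
                + ∑ i ∈ Finset.range ω, (ω - i) * ((max (n + (1 + i) - ω - 2) (2 * (e + 1))) - 2).choose (2*e + 1) := by
            rw [← Finset.sum_add_distrib]
            exact Finset.sum_congr rfl fun i _ => Nat.mul_add _ _ _
          rw [hdist]
          refine Nat.add_le_add (le_of_eq hA) ?_
          have ht : ∑ i ∈ Finset.range ω,
              (ω - i) * ((max (n + (1 + i) - ω - 2) (2 * (e + 1))) - 2).choose (2*e + 1)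
              = ∑ i ∈ Finset.range ω, (ω - i) * (i + (2*e+1) + (n - ω - (2*e+4))).choose (2*e + 1) := by
            apply Finset.sum_congr rfl; intro i _
            have h2 : (max (n + (1 + i) - ω - 2) (2 * (e + 1))) - 2
                = i + (2*e+1) + (n - ω - (2*e+4)) := by omega
            rw [h2]
          rw [ht]
          calc ∑ i ∈ Finset.range ω, (ω - i) * (i + (2*e+1) + (n - ω - (2*e+4))).choose (2*e + 1)
              ≤ (ω + (n - ω - (2*e+4)) + (2*e+1) + 1).choose (2*e + 1 + 2) := tailDH _ _ ω
            _ = (n - 2).choose (2*(e+1) + 1) := by congr 1 <;> omega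
        have hfin := lt_of_lt_of_le hlt hbound
        exact ⟨le_of_lt hfin, iff_of_true hfin (Or.inr ⟨Nat.succ_pos e, by omega⟩)⟩

theorem stmt_16 (d n ω : ℕ) (hn : 2 * (d + 1) ≤ n) (hω : 1 ≤ ω) :
    g n d ω ≤ Nat.choose (ω - 1 + 2 * d) (2 * d) + Nat.choose (n - 2) (2 * d + 1) ∧
    (g n d ω < Nat.choose (ω - 1 + 2 * d) (2 * d) + Nat.choose (n - 2) (2 * d + 1) ↔
      (d = 0 ∧ ω = 1 ∧ 2 < n) ∨ (0 < d ∧ ω + 2 * d + 1 < n)) := by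
  exact main_lemma d n ω hn hω
end
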